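/- arXiv:1708.08260 — 3 statements merged into one kernel-verified Lean document; each statement's English description precedes it below -/
import Mathlib

section
/- Let H be a complex Hilbert space, B a C*-subalgebra of B(H), ξ ∈ H a vector, and R > 0 a constant such that ‖a‖ ≤ R · ‖a ξ‖ for all a ∈ B. Then B is finite-dimensional as a complex vector space. -/
open scoped InnerProductSpace ContinuousMapZero

noncomputable section

namespace CtrlVec
set_option linter.unusedSectionVars false
set_option linter.unusedVariables false
set_option maxHeartbeats 1600000

variable {E : Type*} [NormedRing E] [StarRing E] [CStarRing E]



/-- powers of orthogonal elements stay orthogonal -/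
lemma pow_mul_pow_eq_zero {x y : E} (h : x * y = 0) {m n : ℕ} (hm : 1 ≤ m) (hn : 1 ≤ n) :
    x ^ m * y ^ n = 0 := by
  obtain ⟨m, rfl⟩ := Nat.exists_eq_add_of_le hm
  obtain ⟨n, rfl⟩ := Nat.exists_eq_add_of_le hn
  rw [add_comm 1 m, add_comm 1 n, pow_succ, pow_succ']
  rw [mul_assoc (x ^ m) x _, ← mul_assoc x y _, h, zero_mul, mul_zero]

lemma sum_sq_of_orth {ι : Type*} (t : Finset ι) (x : ι → E)
    (horth : ∀ i ∈ t, ∀ j ∈ t, i ≠ j → x i * x j = 0) :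
    (∑ i ∈ t, x i) ^ 2 = ∑ i ∈ t, x i ^ 2 := by
  rw [sq, Finset.sum_mul_sum]
  exact Finset.sum_congr rfl fun i hi => by
    rw [Finset.sum_eq_single_of_mem i hi (fun j hj hne => horth i hi j hj (Ne.symm hne)), ← sq]

/-- Norm of a sum of pairwise orthogonal selfadjoint contractions is at most 1. -/
lemma norm_sum_le_one {ι : Type*} (t : Finset ι) (x : ι → E)
    (hsa : ∀ i ∈ t, IsSelfAdjoint (x i)) (hnorm : ∀ i ∈ t, ‖x i‖ ≤ 1)
    (horth : ∀ i ∈ t, ∀ j ∈ t, i ≠ j → x i * x j = 0) :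
    ‖∑ i ∈ t, x i‖ ≤ 1 := by
  have key : ∀ k : ℕ, (∑ i ∈ t, x i) ^ (2 ^ k) = ∑ i ∈ t, x i ^ (2 ^ k) := by
    intro k
    induction k with
    | zero => simp
    | succ k ih =>
      have h2 : (2:ℕ) ^ (k+1) = 2 ^ k * 2 := by ring
      rw [h2, pow_mul, ih, sq, Finset.sum_mul_sum]
      exact Finset.sum_congr rfl fun i hi => by
        rw [Finset.sum_eq_single_of_mem i hi
          (fun j hj hne => pow_mul_pow_eq_zero (horth i hi j hj (Ne.symm hne))
            (Nat.one_le_two_pow) (Nat.one_le_two_pow)), ← sq, ← pow_mul]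
  have hsum_sa : IsSelfAdjoint (∑ i ∈ t, x i) := by
    rw [IsSelfAdjoint, star_sum]
    exact Finset.sum_congr rfl (fun i hi => hsa i hi)
  have hbd : ∀ k : ℕ, ‖∑ i ∈ t, x i‖ ^ (2 ^ k) ≤ (t.card : ℝ) := by
    intro k
    have h1 : ‖(∑ i ∈ t, x i) ^ (2 ^ k)‖₊ = ‖∑ i ∈ t, x i‖₊ ^ (2 ^ k) :=
      hsum_sa.nnnorm_pow_two_pow k
    have h2 : ‖(∑ i ∈ t, x i) ^ (2 ^ k)‖ ≤ (t.card : ℝ) := by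
      rw [key k]
      calc ‖∑ i ∈ t, x i ^ (2 ^ k)‖ ≤ ∑ i ∈ t, ‖x i ^ (2 ^ k)‖ := norm_sum_le _ _
      _ ≤ ∑ i ∈ t, (1:ℝ) := by
          refine Finset.sum_le_sum fun i hi => ?_
          calc ‖x i ^ (2^k)‖ ≤ ‖x i‖ ^ (2^k) := norm_pow_le' _ (Nat.pos_of_ne_zero (by positivity))
          _ ≤ 1 := pow_le_one₀ (norm_nonneg _) (hnorm i hi)
      _ = t.card := by simp
    calc ‖∑ i ∈ t, x i‖ ^ (2^k) = ‖(∑ i ∈ t, x i) ^ (2 ^ k)‖ := by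
          have := congrArg (fun z : NNReal => (z : ℝ)) h1
          push_cast at this
          linarith [this]
    _ ≤ (t.card : ℝ) := h2
  by_contra hc
  push_neg at hc
  obtain ⟨m, hm⟩ := pow_unbounded_of_one_lt (t.card : ℝ) hc
  have h1 : ‖∑ i ∈ t, x i‖ ^ m ≤ ‖∑ i ∈ t, x i‖ ^ (2 ^ m) :=
    pow_le_pow_right₀ (le_of_lt hc) (Nat.le_of_lt (Nat.lt_two_pow_self (n := m)))
  linarith [hbd m]


variable {H : Type} [NormedAddCommGroup H] [InnerProductSpace ℂ H] [CompleteSpace H]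

variable [Nontrivial H]
variable {B : NonUnitalStarSubalgebra ℂ (H →L[ℂ] H)} {ξ : H} {R : ℝ}






lemma card_le_bound {B : NonUnitalStarSubalgebra ℂ (H →L[ℂ] H)} {ξ : H} {R : ℝ} (hR : 0 < R)
    (hbound : ∀ a ∈ B, ‖a‖ ≤ R * ‖a ξ‖) {ι : Type*} (t : Finset ι) (x : ι → H →L[ℂ] H)
    (hmem : ∀ i ∈ t, x i ∈ B) (hsa : ∀ i ∈ t, IsSelfAdjoint (x i))
    (hnorm : ∀ i ∈ t, ‖x i‖ = 1)
    (horth : ∀ i ∈ t, ∀ j ∈ t, i ≠ j → x i * x j = 0) :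
    (t.card : ℝ) ≤ R ^ 2 * ‖ξ‖ ^ 2 := by
  set v : ι → H := fun i => x i ξ with hv
  have hlow : ∀ i ∈ t, 1 ≤ R * ‖v i‖ := by
    intro i hi
    have := hbound (x i) (hmem i hi)
    rw [hnorm i hi] at this
    exact this
  have horthv : ∀ i ∈ t, ∀ j ∈ t, i ≠ j → ⟪v i, v j⟫_ℂ = 0 := by
    intro i hi j hj hne
    have h1 : x i = ContinuousLinearMap.adjoint (x i) := ((hsa i hi).adjoint_eq).symm
    calc ⟪v i, v j⟫_ℂ = ⟪(ContinuousLinearMap.adjoint (x i)) ξ, x j ξ⟫_ℂ := by rw [← h1]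
    _ = ⟪ξ, (x i) ((x j) ξ)⟫_ℂ := ContinuousLinearMap.adjoint_inner_left _ _ _
    _ = ⟪ξ, (x i * x j) ξ⟫_ℂ := rfl
    _ = 0 := by rw [horth i hi j hj hne]; simp
  have hpyth : ‖∑ i ∈ t, v i‖ ^ 2 = ∑ i ∈ t, ‖v i‖ ^ 2 := by
    have h1 : (⟪∑ i ∈ t, v i, ∑ j ∈ t, v j⟫_ℂ) = ∑ i ∈ t, ((‖v i‖ : ℂ) ^ 2) := by
      rw [sum_inner]
      refine Finset.sum_congr rfl fun i hi => ?_
      rw [inner_sum, Finset.sum_eq_single_of_mem i hi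
        (fun j hj hne => horthv i hi j hj (Ne.symm hne))]
      rw [inner_self_eq_norm_sq_to_K]
      norm_cast
    rw [inner_self_eq_norm_sq_to_K] at h1
    have h2 : ((‖∑ i ∈ t, v i‖ ^ 2 : ℝ) : ℂ) = ((∑ i ∈ t, ‖v i‖ ^ 2 : ℝ) : ℂ) := by
      push_cast
      exact h1
    exact_mod_cast h2
  have hsum_norm : ‖∑ i ∈ t, x i‖ ≤ 1 :=
    norm_sum_le_one t x hsa (fun i hi => le_of_eq (hnorm i hi)) horth
  have happ : (∑ i ∈ t, x i) ξ = ∑ i ∈ t, v i := by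
    simp [hv]
  have hnormv : ‖∑ i ∈ t, v i‖ ≤ ‖ξ‖ := by
    rw [← happ]
    calc ‖(∑ i ∈ t, x i) ξ‖ ≤ ‖∑ i ∈ t, x i‖ * ‖ξ‖ := ContinuousLinearMap.le_opNorm _ _
    _ ≤ 1 * ‖ξ‖ := by
        apply mul_le_mul_of_nonneg_right hsum_norm (norm_nonneg _)
    _ = ‖ξ‖ := one_mul _
  have hcard : (t.card : ℝ) ≤ ∑ i ∈ t, (R * ‖v i‖) ^ 2 := by
    calc (t.card : ℝ) = ∑ _i ∈ t, (1:ℝ) := by simp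
    _ ≤ ∑ i ∈ t, (R * ‖v i‖) ^ 2 := by
        refine Finset.sum_le_sum fun i hi => ?_
        have := hlow i hi
        nlinarith
  have hfinal : ∑ i ∈ t, (R * ‖v i‖) ^ 2 ≤ R ^ 2 * ‖ξ‖ ^ 2 := by
    have : ∑ i ∈ t, (R * ‖v i‖) ^ 2 = R ^ 2 * ∑ i ∈ t, ‖v i‖ ^ 2 := by
      rw [Finset.mul_sum]
      exact Finset.sum_congr rfl fun i _ => by ring
    rw [this, ← hpyth]
    have h0 : ‖∑ i ∈ t, v i‖ ^ 2 ≤ ‖ξ‖ ^ 2 := by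
      nlinarith [norm_nonneg (∑ i ∈ t, v i)]
    nlinarith
  linarith




lemma cfcnHom_id' {a : H →L[ℂ] H} (ha : IsSelfAdjoint a) :
    cfcₙHom (R := ℝ) ha (ContinuousMapZero.id (quasispectrum ℝ a)) = a := cfcₙHom_id ha

/-- `cfcₙHom` of an element of a closed subalgebra stays in the subalgebra. -/
lemma cfcnHom_mem (hB_closed : IsClosed (B : Set (H →L[ℂ] H))) {a : H →L[ℂ] H}
    (ha : IsSelfAdjoint a) (haB : a ∈ B) (g : C(quasispectrum ℝ a, ℝ)₀) :
    cfcₙHom (R := ℝ) ha g ∈ B := by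
  have hφ : Continuous (cfcₙHom (R := ℝ) ha) := (cfcₙHom_isClosedEmbedding ha).continuous
  induction g using ContinuousMapZero.induction_on_of_compact with
  | zero => rw [map_zero]; exact zero_mem B
  | id => rw [cfcnHom_id' ha]; exact haB
  | star_id => rw [map_star, cfcnHom_id' ha, ha.star_eq]; exact haB
  | add f g hf hg => rw [map_add]; exact add_mem hf hg
  | mul f g hf hg => rw [map_mul]; exact mul_mem hf hg
  | smul r f hf =>
      rw [map_smul, ← algebraMap_smul ℂ r (cfcₙHom (R := ℝ) ha f)]
      exact SMulMemClass.smul_mem _ hf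
  | frequently f hf =>
      exact hf.mem_of_closed (hB_closed.preimage hφ)

lemma cfcnHom_mul_eq_self {a : H →L[ℂ] H} (ha : IsSelfAdjoint a) {e : H →L[ℂ] H}
    (hae : a * e = a) (g : C(quasispectrum ℝ a, ℝ)₀) :
    cfcₙHom (R := ℝ) ha g * e = cfcₙHom (R := ℝ) ha g := by
  have hφ : Continuous (cfcₙHom (R := ℝ) ha) := (cfcₙHom_isClosedEmbedding ha).continuous
  induction g using ContinuousMapZero.induction_on_of_compact with
  | zero => rw [map_zero, zero_mul]
  | id => rw [cfcnHom_id' ha]; exact hae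
  | star_id => rw [map_star, cfcnHom_id' ha, ha.star_eq]; exact hae
  | add f g hf hg => rw [map_add, add_mul, hf, hg]
  | mul f g hf hg => rw [map_mul, mul_assoc, hg]
  | smul r f hf => rw [map_smul, smul_mul_assoc, hf]
  | frequently f hf =>
      exact hf.mem_of_closed <| isClosed_eq (hφ.mul continuous_const) hφ

lemma cfcnHom_eq_mul_self {a : H →L[ℂ] H} (ha : IsSelfAdjoint a) {e : H →L[ℂ] H}
    (hae : e * a = a) (g : C(quasispectrum ℝ a, ℝ)₀) :
    e * cfcₙHom (R := ℝ) ha g = cfcₙHom (R := ℝ) ha g := by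
  have hφ : Continuous (cfcₙHom (R := ℝ) ha) := (cfcₙHom_isClosedEmbedding ha).continuous
  induction g using ContinuousMapZero.induction_on_of_compact with
  | zero => rw [map_zero, mul_zero]
  | id => rw [cfcnHom_id' ha]; exact hae
  | star_id => rw [map_star, cfcnHom_id' ha, ha.star_eq]; exact hae
  | add f g hf hg => rw [map_add, mul_add, hf, hg]
  | mul f g hf hg => rw [map_mul, ← mul_assoc, hf]
  | smul r f hf => rw [map_smul, mul_smul_comm, hf]
  | frequently f hf =>
      exact hf.mem_of_closed <| isClosed_eq (continuous_const.mul hφ) hφ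

/-- cfcₙ-level: membership in the closed subalgebra. -/
lemma cfcn_mem (hB_closed : IsClosed (B : Set (H →L[ℂ] H))) {a : H →L[ℂ] H}
    (ha : IsSelfAdjoint a) (haB : a ∈ B) (f : ℝ → ℝ) : cfcₙ f a ∈ B := by
  by_cases hf : ContinuousOn f (quasispectrum ℝ a)
  · by_cases hf0 : f 0 = 0
    · rw [cfcₙ_apply f a hf hf0]
      exact cfcnHom_mem hB_closed ha haB _
    · rw [cfcₙ_apply_of_not_map_zero a hf0]; exact zero_mem B
  · rw [cfcₙ_apply_of_not_continuousOn a hf]; exact zero_mem B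

lemma cfcn_mul_eq_zero {a : H →L[ℂ] H} (ha : IsSelfAdjoint a) {c : H →L[ℂ] H}
    (hac : a * c = 0) (f : ℝ → ℝ)
    (hf : ContinuousOn f (quasispectrum ℝ a)) (hf0 : f 0 = 0) :
    cfcₙ f a * c = 0 := by
  rw [cfcₙ_apply f a hf hf0]
  refine ContinuousMapZero.nonUnitalStarAlgHom_apply_mul_eq_zero
    (cfcₙHom (R := ℝ) ha) c ?_ ?_ (cfcₙHom_isClosedEmbedding ha).continuous _
  · rw [cfcnHom_id' ha]; exact hac
  · rw [map_star, cfcnHom_id' ha, ha.star_eq]; exact hac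

lemma mul_cfcn_eq_zero {a : H →L[ℂ] H} (ha : IsSelfAdjoint a) {c : H →L[ℂ] H}
    (hac : c * a = 0) (f : ℝ → ℝ)
    (hf : ContinuousOn f (quasispectrum ℝ a)) (hf0 : f 0 = 0) :
    c * cfcₙ f a = 0 := by
  rw [cfcₙ_apply f a hf hf0]
  refine ContinuousMapZero.mul_nonUnitalStarAlgHom_apply_eq_zero
    (cfcₙHom (R := ℝ) ha) c ?_ ?_ (cfcₙHom_isClosedEmbedding ha).continuous _
  · rw [cfcnHom_id' ha]; exact hac
  · rw [map_star, cfcnHom_id' ha, ha.star_eq]; exact hac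

lemma cfcn_absorb_right {a : H →L[ℂ] H} (ha : IsSelfAdjoint a) {e : H →L[ℂ] H}
    (hae : a * e = a) (f : ℝ → ℝ)
    (hf : ContinuousOn f (quasispectrum ℝ a)) (hf0 : f 0 = 0) :
    cfcₙ f a * e = cfcₙ f a := by
  rw [cfcₙ_apply f a hf hf0]; exact cfcnHom_mul_eq_self ha hae _

lemma cfcn_absorb_left {a : H →L[ℂ] H} (ha : IsSelfAdjoint a) {e : H →L[ℂ] H}
    (hae : e * a = a) (f : ℝ → ℝ)
    (hf : ContinuousOn f (quasispectrum ℝ a)) (hf0 : f 0 = 0) :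
    e * cfcₙ f a = cfcₙ f a := by
  rw [cfcₙ_apply f a hf hf0]; exact cfcnHom_eq_mul_self ha hae _




/-! ### bump functions -/

def bump (δ lam : ℝ) : ℝ → ℝ := fun t => max 0 (1 - |t - lam| / δ)

lemma bump_continuous (δ lam : ℝ) : Continuous (bump δ lam) := by
  unfold bump; fun_prop

lemma bump_nonneg (δ lam t : ℝ) : 0 ≤ bump δ lam t := le_max_left _ _

lemma bump_le_one (δ lam t : ℝ) (hδ : 0 < δ) : bump δ lam t ≤ 1 := by
  unfold bump
  have : |t - lam| / δ ≥ 0 := by positivity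
  rw [max_le_iff]; constructor <;> linarith

lemma bump_self (δ lam : ℝ) (hδ : 0 < δ) : bump δ lam lam = 1 := by
  unfold bump; simp

lemma bump_eq_zero (δ lam t : ℝ) (hδ : 0 < δ) (h : δ ≤ |t - lam|) : bump δ lam t = 0 := by
  unfold bump
  rw [max_eq_left]
  have : 1 ≤ |t - lam| / δ := (one_le_div hδ).mpr h
  linarith

lemma bump_mul_bump_eq_zero (δ lam mu t : ℝ) (hδ : 0 < δ) (h : 2 * δ ≤ |lam - mu|) :
    bump δ lam t * bump δ mu t = 0 := by
  have htri : |lam - mu| ≤ |t - lam| + |t - mu| := by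
    calc |lam - mu| = |(lam - t) + (t - mu)| := by ring_nf
    _ ≤ |lam - t| + |t - mu| := abs_add_le _ _
    _ = |t - lam| + |t - mu| := by rw [abs_sub_comm]
  rcases le_or_gt δ |t - lam| with h1 | h1
  · rw [bump_eq_zero δ lam t hδ h1, zero_mul]
  · have h2 : δ ≤ |t - mu| := by linarith
    rw [bump_eq_zero δ mu t hδ h2, mul_zero]






/-- norm-1 criterion : `1 ∈ σₙ` forces norm ≥ 1 -/
lemma one_le_norm_of_one_mem_quasispectrum {b : H →L[ℂ] H}
    (h1 : (1:ℝ) ∈ quasispectrum ℝ b) : 1 ≤ ‖b‖ := by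
  rw [quasispectrum_eq_spectrum_union_zero] at h1
  rcases h1 with h1 | h1
  · simpa using spectrum.norm_le_norm_of_mem h1
  · norm_num at h1

lemma quasispectrum_finite (hR : 0 < R) (hbound : ∀ a ∈ B, ‖a‖ ≤ R * ‖a ξ‖)
    (hB_closed : IsClosed (B : Set (H →L[ℂ] H))) {a : H →L[ℂ] H}
    (ha : IsSelfAdjoint a) (haB : a ∈ B) : (quasispectrum ℝ a).Finite := by
  have key : (quasispectrum ℝ a \ {0}).Finite := by
    by_contra hinf
    rw [← Set.Infinite] at hinf
    set K : ℕ := ⌈R ^ 2 * ‖ξ‖ ^ 2⌉₊ + 1 with hK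
    obtain ⟨t, hts, htcard⟩ := hinf.exists_subset_card_eq K
    have htne : t.Nonempty := by
      rw [← Finset.card_pos, htcard]; omega
    obtain ⟨lam₀, hlam₀⟩ := htne
    have hlam₀ne : lam₀ ≠ 0 := fun h => (hts hlam₀).2 (by simp [h])
    -- construct δ
    set s' : Finset ℝ := insert 0 t with hs'
    have hP : (s'.offDiag).Nonempty := ⟨(0, lam₀), by
      rw [Finset.mem_offDiag]
      exact ⟨Finset.mem_insert_self _ _, Finset.mem_insert_of_mem hlam₀, Ne.symm hlam₀ne⟩⟩
    have hPim : ((s'.offDiag).image fun p => |p.1 - p.2| / 2).Nonempty := hP.image _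
    set δ : ℝ := ((s'.offDiag).image fun p => |p.1 - p.2| / 2).min' hPim with hδdef
    have hδpos : 0 < δ := by
      obtain ⟨p, hp, hpe⟩ := Finset.mem_image.mp (Finset.min'_mem _ hPim)
      rw [Finset.mem_offDiag] at hp
      have : p.1 ≠ p.2 := hp.2.2
      rw [hδdef, ← hpe]
      have : p.1 - p.2 ≠ 0 := sub_ne_zero.mpr this
      positivity
    have hδle : ∀ p ∈ s'.offDiag, δ ≤ |p.1 - p.2| / 2 := fun p hp =>
      Finset.min'_le _ _ (Finset.mem_image_of_mem _ hp)
    have hmem0 : ∀ lam ∈ t, δ ≤ |lam| := by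
      intro lam hlam
      have h := hδle (lam, 0) (by
        rw [Finset.mem_offDiag]
        exact ⟨Finset.mem_insert_of_mem hlam, Finset.mem_insert_self _ _,
          fun h => (hts hlam).2 (by simp only [Set.mem_singleton_iff]; exact h)⟩)
      simp only [sub_zero] at h
      have : 0 ≤ |lam| := abs_nonneg _
      linarith
    have hsep : ∀ lam ∈ t, ∀ mu ∈ t, lam ≠ mu → 2 * δ ≤ |lam - mu| := by
      intro lam hlam mu hmu hne
      have h := hδle (lam, mu) (by
        rw [Finset.mem_offDiag]
        exact ⟨Finset.mem_insert_of_mem hlam, Finset.mem_insert_of_mem hmu, hne⟩)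
      simp only at h
      linarith
    -- bump family
    have hb0 : ∀ lam ∈ t, bump δ lam 0 = 0 := by
      intro lam hlam
      refine bump_eq_zero δ lam 0 hδpos ?_
      rw [zero_sub, abs_neg]
      exact hmem0 lam hlam
    have hcard := card_le_bound hR hbound t (fun lam => cfcₙ (bump δ lam) a)
      (fun lam _ => cfcn_mem hB_closed ha haB _)
      (fun lam _ => cfcₙ_predicate _ a)
      (fun lam hlam => ?_) (fun lam hlam mu hmu hne => ?_)
    · rw [htcard] at hcard
      have h1 : R ^ 2 * ‖ξ‖ ^ 2 ≤ (⌈R ^ 2 * ‖ξ‖ ^ 2⌉₊ : ℝ) := Nat.le_ceil _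
      have h2 : ((⌈R ^ 2 * ‖ξ‖ ^ 2⌉₊ + 1 : ℕ) : ℝ) = (⌈R ^ 2 * ‖ξ‖ ^ 2⌉₊ : ℝ) + 1 := by
        push_cast; ring
      rw [hK] at hcard
      rw [h2] at hcard
      linarith
    · -- norm = 1
      refine le_antisymm (norm_cfcₙ_le fun x _ => ?_) ?_
      · rw [Real.norm_eq_abs, abs_of_nonneg (bump_nonneg _ _ _)]
        exact bump_le_one _ _ _ hδpos
      · refine one_le_norm_of_one_mem_quasispectrum ?_
        rw [cfcₙ_map_quasispectrum (bump δ lam) a ((bump_continuous δ lam).continuousOn)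
          (hb0 lam hlam) ha]
        exact ⟨lam, (hts hlam).1, bump_self δ lam hδpos⟩
    · -- orthogonality
      rw [← cfcₙ_mul (bump δ lam) (bump δ mu) a ((bump_continuous _ _).continuousOn)
          (hb0 lam hlam) ((bump_continuous _ _).continuousOn) (hb0 mu hmu)]
      have : (fun x => bump δ lam x * bump δ mu x) = (0 : ℝ → ℝ) := by
        funext x
        exact bump_mul_bump_eq_zero δ lam mu x hδpos (hsep lam hlam mu hmu hne)
      rw [this, cfcₙ_zero ℝ a]
  have : quasispectrum ℝ a ⊆ (quasispectrum ℝ a \ {0}) ∪ {0} := by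
    intro x hx
    by_cases h : x = 0
    · right; simp [h]
    · left; exact ⟨hx, h⟩
  exact (key.union (Set.finite_singleton 0)).subset this





/-- nonzero projection in B -/
def IsP (B : NonUnitalStarSubalgebra ℂ (H →L[ℂ] H)) (p : H →L[ℂ] H) : Prop :=
  p ∈ B ∧ IsSelfAdjoint p ∧ p * p = p ∧ p ≠ 0

/-- minimal projection in B -/
def IsMin (B : NonUnitalStarSubalgebra ℂ (H →L[ℂ] H)) (p : H →L[ℂ] H) : Prop :=
  IsP B p ∧ ∀ x ∈ B, ∃ c : ℂ, p * x * p = c • p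

lemma IsP.norm_one {p : H →L[ℂ] H} (hp : IsP B p) : ‖p‖ = 1 := by
  obtain ⟨_, hsa, hidem, hne⟩ := hp
  have h1 : ‖star p * p‖ = ‖p‖ * ‖p‖ := CStarRing.norm_star_mul_self
  rw [hsa.star_eq, hidem] at h1
  have h2 : ‖p‖ ≠ 0 := fun h => hne (norm_eq_zero.mp h)
  have h3 : ‖p‖ * 1 = ‖p‖ * ‖p‖ := by rw [mul_one]; exact h1
  exact (mul_left_cancel₀ h2 h3).symm

/-- indicator function of one point -/
def ind (lam : ℝ) : ℝ → ℝ := fun t => if t = lam then 1 else 0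

lemma ind_zero {lam : ℝ} (h : lam ≠ 0) : ind lam 0 = 0 := by
  unfold ind; simp [Ne.symm h]

lemma ind_mul_self (lam : ℝ) : (fun t => ind lam t * ind lam t) = ind lam := by
  funext t; unfold ind; split <;> norm_num

lemma ind_mul_ne {lam mu : ℝ} (h : lam ≠ mu) :
    (fun t => ind lam t * ind mu t) = (0 : ℝ → ℝ) := by
  funext t; unfold ind
  by_cases h1 : t = lam
  · subst h1; simp [h]
  · simp [h1]

lemma continuousOn_of_finite {s : Set ℝ} (hs : s.Finite) (f : ℝ → ℝ) : ContinuousOn f s := by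
  rw [continuousOn_iff_continuous_restrict]
  haveI : Finite s := hs.to_subtype
  haveI : DiscreteTopology s := Finite.instDiscreteTopology
  exact continuous_of_discreteTopology

/-- selfadjoint with quasispectrum ⊆ {0} is zero -/
lemma eq_zero_of_quasispectrum_subset {a : H →L[ℂ] H} (ha : IsSelfAdjoint a)
    (h : quasispectrum ℝ a ⊆ {0}) : a = 0 := by
  have h1 : a = cfcₙ (id : ℝ → ℝ) a := (cfcₙ_id ℝ a).symm
  have h2 : cfcₙ (id : ℝ → ℝ) a = cfcₙ (0 : ℝ → ℝ) a :=
    cfcₙ_congr (fun t ht => by simpa using h ht)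
  rw [h1, h2, cfcₙ_zero]











/-- spectral projection basics -/
lemma specProj_isP (hR : 0 < R) (hbound : ∀ a ∈ B, ‖a‖ ≤ R * ‖a ξ‖)
    (hB_closed : IsClosed (B : Set (H →L[ℂ] H))) {a : H →L[ℂ] H} (ha : IsSelfAdjoint a) (haB : a ∈ B)
    {lam : ℝ} (hlam : lam ∈ quasispectrum ℝ a) (hlamne : lam ≠ 0) :
    IsP B (cfcₙ (ind lam) a) := by
  have hfin := quasispectrum_finite hR hbound hB_closed ha haB
  have hcont := continuousOn_of_finite hfin (ind lam)
  refine ⟨cfcn_mem hB_closed ha haB _, cfcₙ_predicate _ a, ?_, ?_⟩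
  · rw [← cfcₙ_mul _ _ a hcont (ind_zero hlamne) hcont (ind_zero hlamne), ind_mul_self]
  · intro h0
    have h1 : (1:ℝ) ∈ quasispectrum ℝ (cfcₙ (ind lam) a) := by
      rw [cfcₙ_map_quasispectrum (ind lam) a hcont (ind_zero hlamne) ha]
      exact ⟨lam, hlam, by unfold ind; simp⟩
    have := one_le_norm_of_one_mem_quasispectrum h1
    rw [h0] at this
    simp at this
    linarith

/-- The splitting lemma: a non-minimal projection has a proper nonzero subprojection. -/
lemma exists_sub_proj (hR : 0 < R) (hbound : ∀ a ∈ B, ‖a‖ ≤ R * ‖a ξ‖)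
    (hB_closed : IsClosed (B : Set (H →L[ℂ] H))) {p : H →L[ℂ] H} (hp : IsP B p) (hnmin : ¬ IsMin B p) :
    ∃ q, IsP B q ∧ q * p = q ∧ p * q = q ∧ q ≠ p := by
  rw [IsMin, not_and_or] at hnmin
  rcases hnmin with h | h
  · exact absurd hp h
  push_neg at h
  obtain ⟨x, hxB, hxne⟩ := h
  have hpp := hp.2.2.1
  have hpsa := hp.2.1
  -- the selfadjoint element y = pzp not a multiple of p
  have hy : ∃ y, y ∈ B ∧ IsSelfAdjoint y ∧ y * p = y ∧ p * y = y ∧ ∀ c : ℂ, y ≠ c • p := by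
    set u := p * (x + star x) * p with hu
    set v := p * (Complex.I • (x - star x)) * p with hv
    have huB : u ∈ B := mul_mem (mul_mem hp.1 (add_mem hxB (star_mem hxB))) hp.1
    have hvB : v ∈ B := mul_mem (mul_mem hp.1
      (SMulMemClass.smul_mem _ (sub_mem hxB (star_mem hxB)))) hp.1
    have husa : IsSelfAdjoint u := by
      rw [IsSelfAdjoint, hu, star_mul, star_mul, hpsa.star_eq, star_add, star_star]
      rw [add_comm (star x) x, mul_assoc]
    have hvsa : IsSelfAdjoint v := by
      rw [IsSelfAdjoint, hv, star_mul, star_mul, hpsa.star_eq, star_smul, star_sub, star_star]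
      rw [Complex.star_def, Complex.conj_I, neg_smul, smul_sub, neg_sub]
      rw [← smul_sub, mul_assoc]
    have habs : ∀ z, (p * z * p) * p = p * z * p ∧ p * (p * z * p) = p * z * p := by
      intro z
      constructor
      · rw [mul_assoc (p*z) p p, hpp]
      · calc p * (p * z * p) = (p * p) * z * p := by rw [← mul_assoc, ← mul_assoc]
        _ = p * z * p := by rw [hpp]
    by_cases hcu : ∀ c : ℂ, u ≠ c • p
    · exact ⟨u, huB, husa, (habs _).1, (habs _).2, hcu⟩
    by_cases hcv : ∀ c : ℂ, v ≠ c • p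
    · exact ⟨v, hvB, hvsa, (habs _).1, (habs _).2, hcv⟩
    push_neg at hcu hcv
    obtain ⟨c, hc⟩ := hcu
    obtain ⟨c', hc'⟩ := hcv
    exfalso
    have hud : u = p*x*p + p*(star x)*p := by rw [hu, mul_add, add_mul]
    have hvd : v = Complex.I • (p*x*p) - Complex.I • (p*(star x)*p) := by
      rw [hv, mul_smul_comm, smul_mul_assoc, mul_sub, sub_mul, smul_sub]
    have h2 : (2:ℂ) • (p*x*p) = (c - Complex.I * c') • p := by
      calc (2:ℂ) • (p*x*p)
          = (p*x*p + p*(star x)*p) +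
            ((-Complex.I) • (Complex.I • (p*x*p) - Complex.I • (p*(star x)*p))) := by
            rw [smul_sub, smul_smul, smul_smul]
            simp only [neg_mul, Complex.I_mul_I, neg_neg, one_smul]
            module
      _ = c • p + (-Complex.I) • (c' • p) := by rw [← hud, ← hvd, hc, hc']
      _ = (c - Complex.I * c') • p := by
            rw [smul_smul, ← add_smul]
            ring_nf
    apply hxne ((c - Complex.I * c')/2)
    have h3 := congrArg (fun z => (2⁻¹:ℂ) • z) h2
    simp only [smul_smul] at h3
    norm_num at h3
    rw [h3]
    congr 1
    ring
  obtain ⟨y, hyB, hysa, hyp, hpy, hyne⟩ := hy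
  have hyne0 : y ≠ 0 := fun h => hyne 0 (by rw [h, zero_smul])
  have hfin := quasispectrum_finite hR hbound hB_closed hysa hyB
  have hcont : ∀ f : ℝ → ℝ, ContinuousOn f (quasispectrum ℝ y) :=
    fun f => continuousOn_of_finite hfin f
  -- find a nonzero spectral value
  have hlam : ∃ lam ∈ quasispectrum ℝ y, lam ≠ 0 := by
    by_contra hcon
    push_neg at hcon
    exact hyne0 (eq_zero_of_quasispectrum_subset hysa fun t ht => hcon t ht)
  obtain ⟨lam, hlam, hlamne⟩ := hlam
  set q := cfcₙ (ind lam) y with hq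
  have hqP : IsP B q := specProj_isP hR hbound hB_closed hysa hyB hlam hlamne
  have hqp : q * p = q := cfcn_absorb_right hysa hyp (ind lam) (hcont _) (ind_zero hlamne)
  have hpq : p * q = q := cfcn_absorb_left hysa hpy (ind lam) (hcont _) (ind_zero hlamne)
  by_cases hqnep : q = p
  · exfalso
    by_cases hsub : quasispectrum ℝ y ⊆ {0, lam}
    · -- y = lam • p
      apply hyne (lam : ℂ)
      have h1 : y = cfcₙ (id : ℝ → ℝ) y := (cfcₙ_id ℝ y).symm
      have h2 : cfcₙ (id : ℝ → ℝ) y = cfcₙ (fun t => lam • ind lam t) y := by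
        apply cfcₙ_congr
        intro t ht
        rcases hsub ht with h | h
        · subst h
          simp [ind_zero hlamne]
        · simp only [Set.mem_singleton_iff] at h
          subst h
          unfold ind
          simp
      have h3 : cfcₙ (fun t => lam • ind lam t) y = lam • q := by
        rw [hq, cfcₙ_smul lam (ind lam) y (hcont _) (ind_zero hlamne)]
      rw [h1, h2, h3, hqnep, ← algebraMap_smul ℂ lam p]
      rw [Complex.coe_algebraMap]
    · obtain ⟨mu, hmu, hmune⟩ : ∃ mu ∈ quasispectrum ℝ y, mu ∉ ({0, lam} : Set ℝ) := by
        by_contra hcon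
        push_neg at hcon
        exact hsub hcon
      simp only [Set.mem_insert_iff, Set.mem_singleton_iff, not_or] at hmune
      set q' := cfcₙ (ind mu) y with hq'
      have hq'P : IsP B q' := specProj_isP hR hbound hB_closed hysa hyB hmu hmune.1
      have hq'p : q' * p = q' := cfcn_absorb_right hysa hyp (ind mu) (hcont _) (ind_zero hmune.1)
      have horth : q' * q = 0 := by
        rw [hq', hq, ← cfcₙ_mul _ _ y (hcont _) (ind_zero hmune.1) (hcont _) (ind_zero hlamne),
          ind_mul_ne hmune.2, cfcₙ_zero]
      have hqq' : q' * q = q' := by rw [hqnep]; exact hq'p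
      exact hq'P.2.2.2 (by rw [← hqq', horth])
  · exact ⟨q, hqP, hqp, hpq, hqnep⟩















/-- bound on cardinality of orthogonal families of nonzero projections in B -/
lemma card_le_of_isP (hR : 0 < R) (hbound : ∀ a ∈ B, ‖a‖ ≤ R * ‖a ξ‖)
    (t : Finset (H →L[ℂ] H)) (hmem : ∀ q ∈ t, IsP B q)
    (horth : ∀ q ∈ t, ∀ q' ∈ t, q ≠ q' → q * q' = 0) :
    t.card ≤ ⌈R ^ 2 * ‖ξ‖ ^ 2⌉₊ := by
  have h := card_le_bound hR hbound t id (fun q hq => (hmem q hq).1)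
    (fun q hq => (hmem q hq).2.1) (fun q hq => (hmem q hq).norm_one)
    (fun q hq q' hq' hne => horth q hq q' hq' hne)
  calc t.card ≤ ⌈(t.card : ℝ)⌉₊ := by rw [Nat.ceil_natCast]
  _ ≤ ⌈R ^ 2 * ‖ξ‖ ^ 2⌉₊ := Nat.ceil_le_ceil h

/-- every nonzero projection dominates a minimal projection -/
lemma exists_min_aux (hR : 0 < R) (hbound : ∀ a ∈ B, ‖a‖ ≤ R * ‖a ξ‖)
    (hB_closed : IsClosed (B : Set (H →L[ℂ] H))) :
    ∀ (k : ℕ) (p : H →L[ℂ] H), IsP B p →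
    (∀ t : Finset (H →L[ℂ] H), (∀ q ∈ t, IsP B q ∧ q * p = q ∧ p * q = q) →
      (∀ q ∈ t, ∀ q' ∈ t, q ≠ q' → q * q' = 0) → t.card ≤ k) →
    ∃ m, IsMin B m ∧ m * p = m ∧ p * m = m := by
  intro k
  induction k with
  | zero =>
    intro p hp hbd
    exfalso
    have h := hbd {p} (fun q hq => by
      rw [Finset.mem_singleton] at hq
      subst hq
      exact ⟨hp, hp.2.2.1, hp.2.2.1⟩)
      (fun q hq q' hq' hne => by
        rw [Finset.mem_singleton] at hq hq'
        exact absurd (hq.trans hq'.symm) hne)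
    simp at h
  | succ k ih =>
    intro p hp hbd
    classical
    by_cases hmin : IsMin B p
    · exact ⟨p, hmin, hp.2.2.1, hp.2.2.1⟩
    obtain ⟨q, hq, hqp, hpq, hqnep⟩ := exists_sub_proj hR hbound hB_closed hp hmin
    have hpqP : IsP B (p - q) := by
      refine ⟨sub_mem hp.1 hq.1, (hp.2.1).sub (hq.2.1), ?_, sub_ne_zero.mpr (Ne.symm hqnep)⟩
      have expand : (p - q) * (p - q) = p * p - p * q - (q * p - q * q) := by noncomm_ring
      rw [expand, hp.2.2.1, hpq, hqp, hq.2.2.1]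
      abel
    have horthq : q * (p - q) = 0 := by
      rw [mul_sub, hqp, hq.2.2.1, sub_self]
    have horthq' : (p - q) * q = 0 := by
      rw [sub_mul, hpq, hq.2.2.1, sub_self]
    -- families under q are bounded by k
    have hbdq : ∀ t : Finset (H →L[ℂ] H), (∀ r ∈ t, IsP B r ∧ r * q = r ∧ q * r = r) →
        (∀ r ∈ t, ∀ r' ∈ t, r ≠ r' → r * r' = 0) → t.card ≤ k := by
      intro t hmem horth
      have hpqnotmem : (p - q) ∉ t := by
        intro hmem'
        have h1 := (hmem _ hmem').2.2   -- q * (p - q) = p - q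
        rw [horthq] at h1
        exact hpqP.2.2.2 h1.symm
      have h := hbd (insert (p - q) t) (fun r hr => by
        rcases Finset.mem_insert.mp hr with h | h
        · subst h
          refine ⟨hpqP, ?_, ?_⟩
          · rw [sub_mul, hp.2.2.1, hqp]
          · rw [mul_sub, hp.2.2.1, hpq]
        · obtain ⟨hrP, hrq, hqr⟩ := hmem r h
          refine ⟨hrP, ?_, ?_⟩
          · rw [← hrq, mul_assoc, hqp]
          · rw [← hqr, ← mul_assoc, hpq])
        (fun r hr r' hr' hne => by
          rcases Finset.mem_insert.mp hr with h | h <;>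
            rcases Finset.mem_insert.mp hr' with h' | h'
          · exact absurd (h.trans h'.symm) hne
          · subst h
            obtain ⟨hrP, hrq, hqr⟩ := hmem r' h'
            rw [← hqr, ← mul_assoc, horthq', zero_mul]
          · subst h'
            obtain ⟨hrP, hrq, hqr⟩ := hmem r h
            rw [← hrq, mul_assoc, horthq, mul_zero]
          · exact horth r h r' h' hne)
      rw [Finset.card_insert_of_notMem hpqnotmem] at h
      omega
    obtain ⟨m, hm, hmq, hqm⟩ := ih q hq hbdq
    exact ⟨m, hm, by rw [← hmq, mul_assoc, hqp], by rw [← hqm, ← mul_assoc, hpq]⟩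

/-- every nonzero projection dominates a minimal projection, take 2 -/
lemma exists_min (hR : 0 < R) (hbound : ∀ a ∈ B, ‖a‖ ≤ R * ‖a ξ‖)
    (hB_closed : IsClosed (B : Set (H →L[ℂ] H))) {p : H →L[ℂ] H} (hp : IsP B p) :
    ∃ m, IsMin B m ∧ m * p = m ∧ p * m = m :=
  exists_min_aux hR hbound hB_closed ⌈R ^ 2 * ‖ξ‖ ^ 2⌉₊ p hp
    (fun t hmem horth => card_le_of_isP hR hbound t (fun q hq => (hmem q hq).1) horth)





























/-- corner spaces of minimal projections are ≤ 1 dimensional -/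
lemma corner_dim (hR : 0 < R) (hbound : ∀ a ∈ B, ‖a‖ ≤ R * ‖a ξ‖)
    {p q : H →L[ℂ] H} (hp : IsMin B p) (hq : IsMin B q) :
    ∃ w, ∀ x ∈ B, ∃ c : ℂ, p * x * q = c • w := by
  by_cases hall : ∀ x ∈ B, p * x * q = 0
  · exact ⟨0, fun x hx => ⟨0, by rw [hall x hx, zero_smul]⟩⟩
  push_neg at hall
  obtain ⟨x₀, hx₀B, hx₀ne⟩ := hall
  have hpp := hp.1.2.2.1
  have hqq := hq.1.2.2.1
  have hpsa := hp.1.2.1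
  have hqsa := hq.1.2.1
  set w := p * x₀ * q with hw
  refine ⟨w, fun x hxB => ?_⟩
  have hwstar : star w = q * (star x₀ * p) := by
    rw [hw, star_mul, star_mul, hqsa.star_eq, hpsa.star_eq]
  -- star w * w = c₁ • q
  have hprod : star w * w = q * (star x₀ * (p * x₀)) * q := by
    rw [hwstar, hw]
    simp only [mul_assoc]
    rw [← mul_assoc p p, hpp]
  obtain ⟨c₁, hc₁⟩ := hq.2 (star x₀ * (p * x₀))
    (mul_mem (star_mem hx₀B) (mul_mem hp.1.1 hx₀B))
  have hc₁ne : c₁ ≠ 0 := by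
    intro h
    apply hx₀ne
    have h1 : star w * w = 0 := by rw [hprod, hc₁, h, zero_smul]
    have h2 : ‖w‖ * ‖w‖ = 0 := by rw [← CStarRing.norm_star_mul_self, h1, norm_zero]
    have := mul_self_eq_zero.mp h2
    rwa [norm_eq_zero] at this
  -- y * star w = c₂ • p
  set y := p * x * q with hy
  have hyq : y * q = y := by
    rw [hy]
    simp only [mul_assoc]
    rw [hqq]
  have hprod2 : y * star w = p * (x * (q * star x₀)) * p := by
    rw [hy, hwstar]
    simp only [mul_assoc]
    rw [← mul_assoc q q, hqq]
  obtain ⟨c₂, hc₂⟩ := hp.2 (x * (q * star x₀))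
    (mul_mem hxB (mul_mem hq.1.1 (star_mem hx₀B)))
  have hpw : p * w = w := by rw [hw, ← mul_assoc, ← mul_assoc, hpp]
  have hkey : c₁ • y = c₂ • w := by
    calc c₁ • y = y * (c₁ • q) := by rw [mul_smul_comm, hyq]
    _ = y * (star w * w) := by rw [hprod, hc₁]
    _ = (y * star w) * w := (mul_assoc y (star w) w).symm
    _ = (c₂ • p) * w := by rw [hprod2, hc₂]
    _ = c₂ • w := by rw [smul_mul_assoc, hpw]
  refine ⟨c₁⁻¹ * c₂, ?_⟩
  calc p * x * q = y := rfl
  _ = c₁⁻¹ • (c₁ • y) := by rw [smul_smul, inv_mul_cancel₀ hc₁ne, one_smul]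
  _ = c₁⁻¹ • (c₂ • w) := by rw [hkey]
  _ = (c₁⁻¹ * c₂) • w := by rw [smul_smul]

/-- the sum of a maximal orthogonal family of minimal projections is a unit for B -/
theorem main_nontrivial (hR : 0 < R) (hbound : ∀ a ∈ B, ‖a‖ ≤ R * ‖a ξ‖)
    (hB_closed : IsClosed (B : Set (H →L[ℂ] H))) :
    FiniteDimensional ℂ ↥B := by
  classical
  set P : Finset (H →L[ℂ] H) → Prop :=
    fun F => (∀ p ∈ F, IsMin B p) ∧ (∀ p ∈ F, ∀ q ∈ F, p ≠ q → p * q = 0) with hP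
  set s : Set ℕ := {n | ∃ F, P F ∧ F.card = n} with hs
  have h0s : 0 ∈ s := ⟨∅, ⟨fun p hp => absurd hp (Finset.notMem_empty p),
    fun p hp => absurd hp (Finset.notMem_empty p)⟩, rfl⟩
  have hbdd : BddAbove s := by
    refine ⟨⌈R ^ 2 * ‖ξ‖ ^ 2⌉₊, fun n hn => ?_⟩
    obtain ⟨F, hF, hcard⟩ := hn
    rw [← hcard]
    exact card_le_of_isP hR hbound F (fun q hq => (hF.1 q hq).1) hF.2
  obtain ⟨F, hF, hFcard⟩ := Nat.sSup_mem ⟨0, h0s⟩ hbdd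
  have hmax : ∀ F', P F' → F'.card ≤ F.card := by
    intro F' hF'
    rw [hFcard]
    exact le_csSup hbdd ⟨F', hF', rfl⟩
  set e : H →L[ℂ] H := ∑ p ∈ F, p with he
  have heB : e ∈ B := sum_mem (fun p hp => (hF.1 p hp).1.1)
  have hesa : IsSelfAdjoint e := by
    rw [IsSelfAdjoint, he, star_sum]
    exact Finset.sum_congr rfl fun p hp => (hF.1 p hp).1.2.1
  have hep : ∀ p ∈ F, e * p = p := by
    intro p hp
    rw [he, Finset.sum_mul, Finset.sum_eq_single_of_mem p hp
      (fun q hq hne => hF.2 q hq p hp hne), (hF.1 p hp).1.2.2.1]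
  have hpe : ∀ p ∈ F, p * e = p := by
    intro p hp
    rw [he, Finset.mul_sum, Finset.sum_eq_single_of_mem p hp
      (fun q hq hne => hF.2 p hp q hq (Ne.symm hne)), (hF.1 p hp).1.2.2.1]
  have hee : e * e = e := by
    rw [he, Finset.mul_sum]
    exact Finset.sum_congr rfl fun p hp => he ▸ hep p hp
  -- e is a right unit
  have hunit_r : ∀ a ∈ B, a * e = a := by
    intro a haB
    set c : H →L[ℂ] H := a - a * e with hc
    have hcB : c ∈ B := sub_mem haB (mul_mem haB heB)
    set z : H →L[ℂ] H := star c * c with hz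
    have hzB : z ∈ B := mul_mem (star_mem hcB) hcB
    have hzsa : IsSelfAdjoint z := IsSelfAdjoint.star_mul_self c
    have hce : c * e = 0 := by
      rw [hc, sub_mul, mul_assoc, hee, sub_self]
    have hze : z * e = 0 := by rw [hz, mul_assoc, hce, mul_zero]
    have hez : e * z = 0 := by
      have h := congrArg star hze
      rwa [star_mul, hesa.star_eq, hzsa.star_eq, star_zero] at h
    have hz0 : z = 0 := by
      by_contra hzne
      have hfin := quasispectrum_finite hR hbound hB_closed hzsa hzB
      obtain ⟨lam, hlam, hlamne⟩ : ∃ lam ∈ quasispectrum ℝ z, lam ≠ 0 := by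
        by_contra hcon
        push_neg at hcon
        exact hzne (eq_zero_of_quasispectrum_subset hzsa fun t ht => hcon t ht)
      set q : H →L[ℂ] H := cfcₙ (ind lam) z with hqdef
      have hqP : IsP B q := specProj_isP hR hbound hB_closed hzsa hzB hlam hlamne
      have hqe : q * e = 0 :=
        cfcn_mul_eq_zero hzsa hze (ind lam) (continuousOn_of_finite hfin _)
          (ind_zero hlamne)
      obtain ⟨m, hm, hmq, hqm⟩ := exists_min hR hbound hB_closed hqP
      have hme : m * e = 0 := by rw [← hmq, mul_assoc, hqe, mul_zero]
      have hem : e * m = 0 := by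
        have h := congrArg star hme
        rwa [star_mul, hesa.star_eq, hm.1.2.1.star_eq, star_zero] at h
      have hmF : m ∉ F := by
        intro hmem
        have := hpe m hmem
        rw [hme] at this
        exact hm.1.2.2.2 this.symm
      have hPF' : P (insert m F) := by
        constructor
        · intro p hp
          rcases Finset.mem_insert.mp hp with h | h
          · subst h; exact hm
          · exact hF.1 p h
        · intro p hp q' hq' hne
          rcases Finset.mem_insert.mp hp with h | h <;>
            rcases Finset.mem_insert.mp hq' with h' | h'
          · exact absurd (h.trans h'.symm) hne
          · subst h
            rw [← hep q' h', ← mul_assoc, hme, zero_mul]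
          · subst h'
            rw [← hpe p h, mul_assoc, hem, mul_zero]
          · exact hF.2 p h q' h' hne
      have := hmax _ hPF'
      rw [Finset.card_insert_of_notMem hmF] at this
      omega
    have hc0 : c = 0 := by
      have h2 : ‖c‖ * ‖c‖ = 0 := by rw [← CStarRing.norm_star_mul_self, ← hz, hz0, norm_zero]
      have := mul_self_eq_zero.mp h2
      rwa [norm_eq_zero] at this
    have := sub_eq_zero.mp (hc.symm ▸ hc0 : a - a * e = 0)
    exact this.symm
  have hunit_l : ∀ a ∈ B, e * a = a := by
    intro a haB
    have h := congrArg star (hunit_r (star a) (star_mem haB))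
    rwa [star_mul, hesa.star_eq, star_star] at h
  -- now the finite-dimensional span
  set W : (H →L[ℂ] H) × (H →L[ℂ] H) → (H →L[ℂ] H) := fun pq =>
    if h : ∃ w, ∀ x ∈ B, ∃ c : ℂ, pq.1 * x * pq.2 = c • w then h.choose else 0 with hW
  have hWspec : ∀ p q : H →L[ℂ] H, IsMin B p → IsMin B q →
      ∀ x ∈ B, ∃ c : ℂ, p * x * q = c • W (p, q) := by
    intro p q hp hq
    have hex := corner_dim hR hbound hp hq
    have : W (p, q) = hex.choose := by rw [hW]; simp only [dif_pos hex]
    rw [this]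
    exact hex.choose_spec
  set V : Submodule ℂ (H →L[ℂ] H) :=
    Submodule.span ℂ (((F ×ˢ F).image W : Finset (H →L[ℂ] H)) : Set (H →L[ℂ] H)) with hV
  haveI hVfd : FiniteDimensional ℂ ↥V := FiniteDimensional.span_finset ℂ _
  have hBV : ∀ a ∈ B, a ∈ V := by
    intro a haB
    have hdecomp : a = ∑ p ∈ F, ∑ q ∈ F, p * a * q := by
      calc a = e * a * e := by rw [hunit_l a haB, hunit_r a haB]
      _ = ∑ p ∈ F, p * a * e := by rw [he, Finset.sum_mul, Finset.sum_mul]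
      _ = ∑ p ∈ F, ∑ q ∈ F, p * a * q := by
          refine Finset.sum_congr rfl fun p hp => ?_
          rw [he, Finset.mul_sum]
    rw [hdecomp]
    refine Submodule.sum_mem V fun p hp => Submodule.sum_mem V fun q hq => ?_
    obtain ⟨c, hc⟩ := hWspec p q (hF.1 p hp) (hF.1 q hq) a haB
    rw [hc]
    refine Submodule.smul_mem V c (Submodule.subset_span ?_)
    have hpq : (p, q) ∈ F ×ˢ F := Finset.mem_product.mpr ⟨hp, hq⟩
    exact Finset.mem_coe.mpr (Finset.mem_image_of_mem W hpq)
  -- transfer finite-dimensionality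
  set S : Submodule ℂ (H →L[ℂ] H) := B.toNonUnitalSubalgebra.toSubmodule with hS
  have hSV : S ≤ V := fun a ha => hBV a ha
  haveI : FiniteDimensional ℂ ↥S := Submodule.finiteDimensional_of_le hSV
  let eqv : (↥S) ≃ₗ[ℂ] (↥B) :=
    { toFun := fun x => ⟨x.1, x.2⟩
      invFun := fun x => ⟨x.1, x.2⟩
      map_add' := fun _ _ => rfl
      map_smul' := fun _ _ => rfl
      left_inv := fun _ => rfl
      right_inv := fun _ => rfl }
  exact Module.Finite.equiv eqv


end CtrlVec

end

noncomputable section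

/-- If `B` is a C*-subalgebra (a norm-closed star-subalgebra) of `B(H)` and `ξ ∈ H`,
`R > 0` are such that `‖a‖ ≤ R ‖a ξ‖` for all `a ∈ B`, then `B` is finite-dimensional
over `ℂ`. -/
theorem finiteDimensional_of_norm_le_vector_norm
    {H : Type} [NormedAddCommGroup H] [InnerProductSpace ℂ H] [CompleteSpace H]
    (B : NonUnitalStarSubalgebra ℂ (H →L[ℂ] H)) (hB_closed : IsClosed (B : Set (H →L[ℂ] H)))
    (ξ : H) (R : ℝ) (hR : 0 < R)
    (hbound : ∀ a ∈ B, ‖a‖ ≤ R * ‖a ξ‖) :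
    FiniteDimensional ℂ ↥B := by
  rcases subsingleton_or_nontrivial H with hs | hnt
  · haveI : Subsingleton (H →L[ℂ] H) :=
      ⟨fun a b => ContinuousLinearMap.ext fun v => Subsingleton.elim _ _⟩
    haveI : Subsingleton ↥B := ⟨fun a b => Subtype.ext (Subsingleton.elim _ _)⟩
    exact Module.Finite.of_basis (Module.Basis.empty ↥B (ι := Fin 0))
  · exact CtrlVec.main_nontrivial hR hbound hB_closed

end
end

section
/- Let B be a unital C*-algebra and h ∈ B a positive element such that 0 lies in the spectrum of h and 0 is not an isolated point of the spectrum of h. Then there exists a sequence (f_j) of positive elements of B with ‖f_j‖ = 1 for all j, f_j f_k = 0 whenever j ≠ k, and ‖h f_j‖ → 0 as j → ∞. -/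
noncomputable section

/-- If `h` is a positive element of a unital C*-algebra `B` such that `0` lies in the
spectrum of `h` and is not an isolated point of it, then there is a sequence `(f j)` of
positive norm-one elements of `B` which are pairwise orthogonal and satisfy
`‖h * f j‖ → 0`. -/
theorem exists_orthogonal_sequence_of_not_isolated_zero
    {B : Type} [NormedRing B] [StarRing B] [CStarRing B]
    [NormedAlgebra ℂ B] [CompleteSpace B] [StarModule ℂ B]
    (h : B) (hh_pos : ∃ c : B, h = star c * c)
    (h0_mem : (0 : ℂ) ∈ spectrum ℂ h)
    (h0_not_isolated : ∀ ε > (0 : ℝ), ∃ z ∈ spectrum ℂ h, z ≠ 0 ∧ ‖z‖ < ε) :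
    ∃ f : ℕ → B, (∀ j, ∃ c : B, f j = star c * c) ∧ (∀ j, ‖f j‖ = 1) ∧
      (∀ j k, j ≠ k → f j * f k = 0) ∧
      Filter.Tendsto (fun j => ‖h * f j‖) Filter.atTop (nhds 0) := by
  letI : CStarAlgebra B :=
    { ‹NormedRing B›, ‹StarRing B›, ‹CompleteSpace B›, ‹CStarRing B›,
      ‹NormedAlgebra ℂ B›, ‹StarModule ℂ B› with }
  obtain ⟨c₀, hc₀⟩ := hh_pos
  have hsa : IsSelfAdjoint h := hc₀ ▸ IsSelfAdjoint.star_mul_self c₀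
  -- every neighbourhood of `0` contains a nonzero point of the real spectrum
  have key : ∀ ε : ℝ, 0 < ε → ∃ r : ℝ, r ∈ spectrum ℝ h ∧ r ≠ 0 ∧ |r| < ε := by
    intro ε hε
    obtain ⟨z, hz, hz0, hzn⟩ := h0_not_isolated ε hε
    have h2 : ((z.re : ℝ) : ℂ) = z :=
      hsa.quasispectrumRestricts.rightInvOn (spectrum_subset_quasispectrum ℂ h hz)
    refine ⟨z.re, spectrum.of_algebraMap_mem ℂ (h2 ▸ hz), ?_, ?_⟩
    · intro h0
      apply hz0
      rw [← h2, h0, Complex.ofReal_zero]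
    · calc |z.re| ≤ ‖z‖ := Complex.abs_re_le_norm z
        _ = ‖z‖ := rfl
        _ < ε := hzn
  -- construct a sequence of nonzero spectrum points going to zero fast
  choose next hnext_mem hnext_ne hnext_lt using
    fun r (hr : r ≠ (0 : ℝ)) => key (|r| / 2) (by positivity)
  obtain ⟨r₀, hr₀_mem, hr₀_ne, -⟩ := key 1 one_pos
  set δ : ℕ → {r : ℝ // r ∈ spectrum ℝ h ∧ r ≠ 0} :=
    fun n => Nat.rec ⟨r₀, hr₀_mem, hr₀_ne⟩
      (fun _ p => ⟨next p.1 p.2.2, hnext_mem _ _, hnext_ne _ _⟩) n with hδ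
  have hstep : ∀ n, |(δ (n + 1)).1| < |(δ n).1| / 2 := fun n => hnext_lt _ _
  have habs_pos : ∀ n, 0 < |(δ n).1| := fun n => abs_pos.mpr (δ n).2.2
  have hhalf : ∀ j k, j < k → |(δ k).1| < |(δ j).1| / 2 := by
    intro j k hjk
    induction k with
    | zero => omega
    | succ k ih =>
      rcases Nat.lt_succ_iff_lt_or_eq.mp hjk with hc | hc
      · have h1 := ih hc
        have h2 := hstep k
        have h3 := habs_pos j
        linarith
      · subst hc; exact hstep j
  have hgeo : ∀ n, |(δ n).1| ≤ |r₀| * (1 / 2) ^ n := by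
    intro n
    induction n with
    | zero => simp [hδ]
    | succ n ih =>
      have h1 := hstep n
      have h2 : (1 / 2 : ℝ) ^ (n + 1) = (1 / 2) ^ n / 2 := by ring
      rw [h2]
      linarith
  -- the bump functions
  set g : ℕ → ℝ → ℝ := fun j x => max 0 (1 - 4 / |(δ j).1| * |x - (δ j).1|) with hg
  have hg_cont : ∀ j, Continuous (g j) := fun j => by fun_prop
  have hg_nonneg : ∀ j x, 0 ≤ g j x := fun j x => le_max_left _ _
  have hg_le : ∀ j x, g j x ≤ 1 := by
    intro j x
    apply max_le zero_le_one
    have h1 : 0 ≤ 4 / |(δ j).1| * |x - (δ j).1| := by positivity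
    linarith
  have hg_self : ∀ j, g j ((δ j).1) = 1 := by
    intro j; simp [hg]
  have hg_supp : ∀ j x, g j x ≠ 0 →
      3 / 4 * |(δ j).1| < |x| ∧ |x| < 5 / 4 * |(δ j).1| := by
    intro j x hx
    have ht : 0 < 1 - 4 / |(δ j).1| * |x - (δ j).1| := by
      by_contra hcon
      exact hx (max_eq_left (by linarith [not_lt.mp hcon]))
    have h4 : 4 * |x - (δ j).1| < |(δ j).1| := by
      have hp := habs_pos j
      rw [div_mul_eq_mul_div] at ht
      have h5 : 4 * |x - (δ j).1| / |(δ j).1| < 1 := by linarith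
      exact (div_lt_one hp).mp h5
    have ha1 : |x| - |(δ j).1| ≤ |x - (δ j).1| := abs_sub_abs_le_abs_sub _ _
    have ha2 : |(δ j).1| - |x| ≤ |x - (δ j).1| := by
      have := abs_sub_abs_le_abs_sub (δ j).1 x
      rwa [abs_sub_comm] at this
    constructor <;> linarith
  set f : ℕ → B := fun j => cfc (g j) h with hf
  refine ⟨f, ?_, ?_, ?_, ?_⟩
  · -- positivity
    intro j
    refine ⟨cfc (fun x => Real.sqrt (g j x)) h, ?_⟩
    have hc : IsSelfAdjoint (cfc (fun x => Real.sqrt (g j x)) h) := cfc_predicate _ h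
    rw [hf]
    rw [hc.star_eq, ← cfc_mul (fun x => Real.sqrt (g j x)) (fun x => Real.sqrt (g j x)) h
        (by fun_prop) (by fun_prop)]
    exact cfc_congr fun x _ => (Real.mul_self_sqrt (hg_nonneg j x)).symm
  · -- norm one
    intro j
    refine le_antisymm ?_ ?_
    · refine norm_cfc_le zero_le_one fun x hx => ?_
      rw [Real.norm_eq_abs, abs_of_nonneg (hg_nonneg j x)]
      exact hg_le j x
    · have h1 := norm_apply_le_norm_cfc (g j) h (δ j).2.1 (hg_cont j).continuousOn hsa
      rw [hg_self j] at h1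
      simpa using h1
  · -- orthogonality
    intro j k hjk
    have hzero : ∀ x, g j x * g k x = 0 := by
      intro x
      by_contra hcon
      have hj : g j x ≠ 0 := fun hh => hcon (by rw [hh, zero_mul])
      have hk : g k x ≠ 0 := fun hh => hcon (by rw [hh, mul_zero])
      obtain ⟨hj1, hj2⟩ := hg_supp j x hj
      obtain ⟨hk1, hk2⟩ := hg_supp k x hk
      rcases lt_or_gt_of_ne hjk with hlt | hlt
      · have := hhalf j k hlt
        linarith
      · have := hhalf k j hlt
        linarith
    rw [hf]
    rw [← cfc_mul (g j) (g k) h (hg_cont j).continuousOn (hg_cont k).continuousOn]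
    have : (fun x => g j x * g k x) = (0 : ℝ → ℝ) := funext hzero
    rw [this, cfc_zero]
  · -- tendsto
    have hb : ∀ j, ‖h * f j‖ ≤ 5 / 4 * (|r₀| * (1 / 2) ^ j) := by
      intro j
      have heq : h * f j = cfc (fun x => x * g j x) h := by
        calc h * f j = cfc (id : ℝ → ℝ) h * cfc (g j) h := by rw [cfc_id ℝ h]
          _ = cfc (fun x => x * g j x) h :=
            (cfc_mul (id : ℝ → ℝ) (g j) h continuous_id.continuousOn
              (hg_cont j).continuousOn).symm
      rw [heq]
      refine norm_cfc_le (by positivity) fun x hx => ?_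
      rw [Real.norm_eq_abs, abs_mul]
      by_cases hgx : g j x = 0
      · rw [hgx, abs_zero, mul_zero]; positivity
      · obtain ⟨-, h2⟩ := hg_supp j x hgx
        have h3 : |g j x| ≤ 1 := by
          rw [abs_of_nonneg (hg_nonneg j x)]; exact hg_le j x
        have h4 : |x| * |g j x| ≤ |x| * 1 := by
          apply mul_le_mul_of_nonneg_left h3 (abs_nonneg x)
        have h5 := hgeo j
        nlinarith [abs_nonneg x]
    have htend : Filter.Tendsto (fun j : ℕ => 5 / 4 * (|r₀| * (1 / 2) ^ j))
        Filter.atTop (nhds 0) := by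
      have := tendsto_pow_atTop_nhds_zero_of_lt_one (by norm_num : (0:ℝ) ≤ 1/2)
        (by norm_num : (1/2 : ℝ) < 1)
      simpa using (this.const_mul (|r₀|)).const_mul (5 / 4 : ℝ)
    exact squeeze_zero (fun j => norm_nonneg _) hb htend
end
end

section
/- Let B be a unital C*-algebra, φ a state on B, H a complex Hilbert space, π : B → B(H) a unital star-algebra homomorphism, and ξ ∈ H a unit vector cyclic for π (π(B)ξ dense in H) with φ(x) = ⟨π(x)ξ, ξ⟩ for all x ∈ B. Let M denote the double commutant of π(B) inside B(H). Suppose there exists a unitary u ∈ M such that ⟨u^k ξ, ξ⟩ = 0 for every integer k ≠ 0 and ⟨u* T u ξ, ξ⟩ = ⟨T ξ, ξ⟩ for every T ∈ M. Then for every finite subset F of B and every ε > 0 there exists b ∈ B with |φ(b b*) − 1| < ε, |φ(x b)| < ε and |φ(b* x b) − φ(x)| < ε for all x ∈ F. (Equivalently, there is a net (b_i) in B with lim_i φ(b_i b_i*) = 1, lim_i φ(b_i* x b_i) = φ(x) and lim_i φ(x b_i) = 0 for every x ∈ B.) -/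
open scoped InnerProductSpace

noncomputable section

set_option linter.unusedSectionVars false
set_option linter.unusedVariables false
set_option maxHeartbeats 1000000


lemma aux_proj_comm {K : Type} [NormedAddCommGroup K] [InnerProductSpace ℂ K] [CompleteSpace K]
    (W : Submodule ℂ K) [Submodule.HasOrthogonalProjection W]
    (A : K →L[ℂ] K) (hA : ∀ x ∈ W, A x ∈ W)
    (hA' : ∀ x ∈ W, ContinuousLinearMap.adjoint A x ∈ W) (z : K) :
    A (Submodule.orthogonalProjection W z) = (Submodule.orthogonalProjection W (A z) : K) := by
  have hdec : A z = A (Submodule.orthogonalProjection W z) + A (z - Submodule.orthogonalProjection W z) := by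
    rw [← map_add]; congr 1; abel
  have h1 : A ((Submodule.orthogonalProjection W z : K)) ∈ W := hA _ (Submodule.orthogonalProjection W z).2
  have h2 : A (z - Submodule.orthogonalProjection W z) ∈ Wᗮ := by
    rw [Submodule.mem_orthogonal]
    intro w hw
    have heq : ⟪w, A (z - Submodule.orthogonalProjection W z)⟫_ℂ
        = ⟪ContinuousLinearMap.adjoint A w, z - Submodule.orthogonalProjection W z⟫_ℂ := by
      rw [ContinuousLinearMap.adjoint_inner_left]
    rw [heq]
    have h3 := Submodule.sub_starProjection_mem_orthogonal (K := W) z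
    rw [Submodule.mem_orthogonal] at h3
    exact h3 _ (hA' _ hw)
  rw [hdec, map_add]
  rw [Submodule.orthogonalProjectionOnto_apply_of_mem_orthogonal h2]
  have h3 : (Submodule.orthogonalProjection W (A (Submodule.orthogonalProjection W z : K)) : K)
      = A (Submodule.orthogonalProjection W z : K) := (Submodule.starProjection_eq_self_iff (K := W)).mpr h1
  rw [Submodule.coe_add, h3, Submodule.coe_zero, add_zero]

variable {B : Type} [NormedRing B] [StarRing B] [CStarRing B]
    [NormedAlgebra ℂ B] [CompleteSpace B] [StarModule ℂ B]
variable {H : Type} [NormedAddCommGroup H] [InnerProductSpace ℂ H] [CompleteSpace H]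

lemma aux_vn2 (π : B →⋆ₐ[ℂ] (H →L[ℂ] H))
    (T : H →L[ℂ] H)
    (hT : T ∈ Set.centralizer (Set.centralizer (Set.range fun b : B => π b)))
    (ξ w v η : H) (h : ∀ b : B, ⟪v, π b ξ⟫_ℂ + ⟪η, π b w⟫_ℂ = 0) :
    ⟪v, T ξ⟫_ℂ + ⟪η, T w⟫_ℂ = 0 := by
  classical
  set K := WithLp 2 (H × H) with hK
  let e : WithLp 2 (H × H) ≃ H × H := WithLp.equiv 2 (H × H)
  let mk : H → H → K := fun x y => e.symm (x, y)
  let Lw : B →ₗ[ℂ] K :=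
    { toFun := fun b => mk (π b ξ) (π b w)
      map_add' := by
        intro a b
        simp only [mk, map_add, ContinuousLinearMap.add_apply]
        rfl
      map_smul' := by
        intro c b
        simp only [mk, map_smul, ContinuousLinearMap.smul_apply, RingHom.id_apply]
        rfl }
  let Ecl : K ≃L[ℂ] H × H := WithLp.prodContinuousLinearEquiv 2 ℂ H H
  let ρ : (H →L[ℂ] H) → (K →L[ℂ] K) := fun X =>
    (Ecl.symm.toContinuousLinearMap.comp ((X.prodMap X).comp Ecl.toContinuousLinearMap))
  have hρ_apply : ∀ (X : H →L[ℂ] H) (z : K), ρ X z = mk (X z.fst) (X z.snd) := by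
    intro X z; rfl
  have hmk_fst : ∀ (x y : H), (mk x y).fst = x := fun _ _ => rfl
  have hmk_snd : ∀ (x y : H), (mk x y).snd = y := fun _ _ => rfl
  have hinner : ∀ (z z' : K), ⟪z, z'⟫_ℂ = ⟪z.fst, z'.fst⟫_ℂ + ⟪z.snd, z'.snd⟫_ℂ :=
    fun z z' => WithLp.prod_inner_apply z z'
  have hρ_adj : ∀ X : H →L[ℂ] H,
      ContinuousLinearMap.adjoint (ρ X) = ρ (ContinuousLinearMap.adjoint X) := by
    intro X
    symm
    rw [ContinuousLinearMap.eq_adjoint_iff]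
    intro x y
    rw [hρ_apply, hρ_apply, hinner, hinner, hmk_fst, hmk_snd, hmk_fst, hmk_snd,
      ContinuousLinearMap.adjoint_inner_left, ContinuousLinearMap.adjoint_inner_left]
  let W0 : Submodule ℂ K := LinearMap.range Lw
  let W : Submodule ℂ K := W0.topologicalClosure
  haveI : CompleteSpace W := (Submodule.isClosed_topologicalClosure W0).completeSpace_coe
  let P : K →L[ℂ] K := W.subtypeL.comp (Submodule.orthogonalProjection W)
  have hPmem : ∀ z, P z ∈ W := fun z => (Submodule.orthogonalProjection W z).2
  have hPid : ∀ z ∈ W, P z = z := fun z hz => (Submodule.starProjection_eq_self_iff (K := W)).mpr hz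
  have hW0inv : ∀ (b : B), ∀ x ∈ W0, ρ (π b) x ∈ W0 := by
    rintro b x ⟨c, rfl⟩
    refine ⟨b * c, ?_⟩
    show mk (π (b*c) ξ) (π (b*c) w) = ρ (π b) (mk (π c ξ) (π c w))
    rw [hρ_apply, hmk_fst, hmk_snd, map_mul]
    rfl
  have hWinv : ∀ (b : B), ∀ x ∈ W, ρ (π b) x ∈ W := by
    intro b x hx
    have hsub : W ≤ Submodule.comap ((ρ (π b)) : K →ₗ[ℂ] K) W := by
      apply Submodule.topologicalClosure_minimal
      · intro y hy
        exact Submodule.le_topologicalClosure W0 (hW0inv b y hy)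
      · exact (Submodule.isClosed_topologicalClosure W0).preimage (ρ (π b)).continuous
    exact hsub hx
  have hPcomm : ∀ (b : B) (z : K), ρ (π b) (P z) = P (ρ (π b) z) := by
    intro b z
    have hadj : ∀ x ∈ W, ContinuousLinearMap.adjoint (ρ (π b)) x ∈ W := by
      intro x hx
      rw [hρ_adj]
      have hst : ContinuousLinearMap.adjoint (π b) = π (star b) := by
        rw [← ContinuousLinearMap.star_eq_adjoint, ← map_star]
      rw [hst]
      exact hWinv (star b) x hx
    exact aux_proj_comm W (ρ (π b)) (hWinv b) hadj z
  -- components of P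
  let fstL : K →L[ℂ] H := (ContinuousLinearMap.fst ℂ H H).comp Ecl.toContinuousLinearMap
  let sndL : K →L[ℂ] H := (ContinuousLinearMap.snd ℂ H H).comp Ecl.toContinuousLinearMap
  let inlL : H →L[ℂ] K := Ecl.symm.toContinuousLinearMap.comp (ContinuousLinearMap.inl ℂ H H)
  let inrL : H →L[ℂ] K := Ecl.symm.toContinuousLinearMap.comp (ContinuousLinearMap.inr ℂ H H)
  have hext : ∀ (y y' : K), y.fst = y'.fst → y.snd = y'.snd → y = y' := by
    intro y y' h1 h2
    exact WithLp.ofLp_injective 2 (Prod.ext h1 h2)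
  have hdecomp : ∀ z : K, inlL z.fst + inrL z.snd = z := by
    intro z
    apply hext
    · show z.fst + 0 = z.fst
      rw [add_zero]
    · show 0 + z.snd = z.snd
      rw [zero_add]
  have hρinl : ∀ (X : H →L[ℂ] H) (x : H), ρ X (inlL x) = inlL (X x) := by
    intro X x
    rw [hρ_apply]
    apply hext
    · rfl
    · show X 0 = 0
      rw [map_zero]
  have hρinr : ∀ (X : H →L[ℂ] H) (x : H), ρ X (inrL x) = inrL (X x) := by
    intro X x
    rw [hρ_apply]
    apply hext
    · show X 0 = 0
      rw [map_zero]
    · rfl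
  have hρfst : ∀ (X : H →L[ℂ] H) (z : K), (ρ X z).fst = X z.fst := fun X z => rfl
  have hρsnd : ∀ (X : H →L[ℂ] H) (z : K), (ρ X z).snd = X z.snd := fun X z => rfl
  let P11 : H →L[ℂ] H := fstL.comp (P.comp inlL)
  let P12 : H →L[ℂ] H := fstL.comp (P.comp inrL)
  let P21 : H →L[ℂ] H := sndL.comp (P.comp inlL)
  let P22 : H →L[ℂ] H := sndL.comp (P.comp inrL)
  -- each component commutes with every π b
  have hmemC : ∀ Q ∈ [P11, P12, P21, P22], Q ∈ Set.centralizer (Set.range fun b : B => π b) := by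
    intro Q hQ
    rintro s ⟨b, rfl⟩
    have key : ∀ (il : H →L[ℂ] K) (pr : K →L[ℂ] H),
        (∀ (X : H →L[ℂ] H) (x : H), ρ X (il x) = il (X x)) →
        (∀ (X : H →L[ℂ] H) (z : K), pr (ρ X z) = X (pr z)) →
        π b * (pr.comp (P.comp il)) = (pr.comp (P.comp il)) * π b := by
      intro il pr hil hpr
      ext x
      show π b (pr (P (il x))) = pr (P (il (π b x)))
      rw [← hpr (π b) (P (il x)), hPcomm b (il x), hil (π b) x]
    have hprf : ∀ (X : H →L[ℂ] H) (z : K), fstL (ρ X z) = X (fstL z) := fun X z => hρfst X z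
    have hprs : ∀ (X : H →L[ℂ] H) (z : K), sndL (ρ X z) = X (sndL z) := fun X z => hρsnd X z
    simp only [List.mem_cons, List.mem_singleton] at hQ
    rcases hQ with rfl | rfl | rfl | rfl | h
    · exact key inlL fstL hρinl hprf
    · exact key inrL fstL hρinr hprf
    · exact key inlL sndL hρinl hprs
    · exact key inrL sndL hρinr hprs
    · exact absurd h List.not_mem_nil
  have hTcomm : ∀ Q ∈ [P11, P12, P21, P22], ∀ x : H, T (Q x) = Q (T x) := by
    intro Q hQ x
    have hc : Q * T = T * Q := Set.mem_centralizer_iff.mp hT Q (hmemC Q hQ)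
    calc T (Q x) = (T * Q) x := rfl
    _ = (Q * T) x := by rw [hc]
    _ = Q (T x) := rfl
  -- P components applied
  have hPfst : ∀ z : K, (P z).fst = P11 z.fst + P12 z.snd := by
    intro z
    conv_lhs => rw [← hdecomp z, map_add]
    show (P (inlL z.fst)).fst + (P (inrL z.snd)).fst = _
    rfl
  have hPsnd : ∀ z : K, (P z).snd = P21 z.fst + P22 z.snd := by
    intro z
    conv_lhs => rw [← hdecomp z, map_add]
    show (P (inlL z.fst)).snd + (P (inrL z.snd)).snd = _
    rfl
  have hPT : ∀ z : K, ρ T (P z) = P (ρ T z) := by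
    intro z
    apply hext
    · rw [hρfst, hPfst, hPfst (ρ T z), hρfst, hρsnd, map_add,
        hTcomm P11 (by simp) z.fst, hTcomm P12 (by simp) z.snd]
    · rw [hρsnd, hPsnd, hPsnd (ρ T z), hρfst, hρsnd, map_add,
        hTcomm P21 (by simp) z.fst, hTcomm P22 (by simp) z.snd]
  -- the cyclic-type vector (ξ, w) lies in W
  have hz0' : (Lw 1 : K) = mk ξ w := by
    show mk (π 1 ξ) (π 1 w) = mk ξ w
    rw [map_one]
    rfl
  have hz0 : mk ξ w ∈ W := by
    rw [← hz0']
    exact Submodule.le_topologicalClosure W0 ⟨1, rfl⟩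
  have hρT0 : ρ T (mk ξ w) ∈ W := by
    have h1 : P (mk ξ w) = mk ξ w := hPid _ hz0
    have h2 : ρ T (mk ξ w) = P (ρ T (mk ξ w)) := by
      conv_lhs => rw [← h1]
      exact hPT (mk ξ w)
    rw [h2]
    exact hPmem _
  -- the vector (v, η) is orthogonal to W
  have hq : ∀ y ∈ W, ⟪(mk v η : K), y⟫_ℂ = 0 := by
    intro y hy
    have hclosed : IsClosed {y : K | ⟪(mk v η : K), y⟫_ℂ = 0} :=
      isClosed_eq (Continuous.inner continuous_const continuous_id) continuous_const
    have hsub : (W : Set K) ⊆ {y : K | ⟪(mk v η : K), y⟫_ℂ = 0} := by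
      rw [Submodule.topologicalClosure_coe]
      apply closure_minimal _ hclosed
      rintro y ⟨b, rfl⟩
      show ⟪(mk v η : K), Lw b⟫_ℂ = 0
      have : ⟪(mk v η : K), Lw b⟫_ℂ = ⟪v, π b ξ⟫_ℂ + ⟪η, π b w⟫_ℂ := by
        rw [hinner]; rfl
      rw [this]
      exact h b
    exact hsub hy
  have := hq _ hρT0
  rw [hinner, hρ_apply] at this
  rw [hmk_fst, hmk_snd, hmk_fst, hmk_snd] at this
  exact this

lemma aux_sstar (π : B →⋆ₐ[ℂ] (H →L[ℂ] H)) (ξ : H)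
    (T : H →L[ℂ] H)
    (hT : T ∈ Set.centralizer (Set.centralizer (Set.range fun b : B => π b)))
    (δ : ℝ) (hδ : 0 < δ) :
    ∃ b : B, ‖π b ξ - T ξ‖ < δ ∧ ‖π (star b) ξ - (star T) ξ‖ < δ := by
  classical
  set K := WithLp 2 (H × H) with hK
  let e : WithLp 2 (H × H) ≃ H × H := WithLp.equiv 2 (H × H)
  let mk : H → H → K := fun x y => e.symm (x, y)
  have hmk_fst : ∀ (x y : H), (mk x y).fst = x := fun _ _ => rfl
  have hmk_snd : ∀ (x y : H), (mk x y).snd = y := fun _ _ => rfl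
  have hinner : ∀ (z z' : K), ⟪z, z'⟫_ℂ = ⟪z.fst, z'.fst⟫_ℂ + ⟪z.snd, z'.snd⟫_ℂ :=
    fun z z' => WithLp.prod_inner_apply z z'
  letI : InnerProductSpace ℝ K := InnerProductSpace.complexToReal
  have hrinner : ∀ (z z' : K), ⟪z, z'⟫_ℝ = Complex.re ⟪z, z'⟫_ℂ := fun z z' => rfl
  let f : B → K := fun b => mk (π b ξ) (π (star b) ξ)
  let C : Submodule ℝ K :=
    { carrier := Set.range f
      add_mem' := by
        rintro x y ⟨a, rfl⟩ ⟨b, rfl⟩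
        refine ⟨a + b, ?_⟩
        show mk (π (a+b) ξ) (π (star (a+b)) ξ) = f a + f b
        rw [star_add, map_add, map_add]
        show mk (π a ξ + π b ξ) (π (star a) ξ + π (star b) ξ) = _
        rfl
      zero_mem' := by
        refine ⟨0, ?_⟩
        show mk (π 0 ξ) (π (star (0:B)) ξ) = 0
        rw [star_zero, map_zero]
        show mk ((0 : H →L[ℂ] H) ξ) ((0 : H →L[ℂ] H) ξ) = 0
        rfl
      smul_mem' := by
        intro r x hx
        obtain ⟨b, rfl⟩ := hx
        refine ⟨(r : ℂ) • b, ?_⟩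
        show mk (π ((r:ℂ) • b) ξ) (π (star ((r:ℂ) • b)) ξ) = r • f b
        rw [star_smul, map_smul, map_smul]
        show mk (((r:ℂ) • π b) ξ) ((star (r:ℂ) • π (star b)) ξ) = r • f b
        rw [Complex.star_def, Complex.conj_ofReal]
        show mk ((r:ℂ) • (π b ξ)) ((r:ℂ) • (π (star b) ξ)) = r • f b
        have : ∀ (x y : H), mk ((r:ℂ) • x) ((r:ℂ) • y) = r • mk x y := by
          intro x y
          show ((WithLp.equiv 2 (H × H)).symm ((r:ℂ) • x, (r:ℂ) • y)) = r • _
          rfl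
        exact this _ _ }
  let p : K := mk (T ξ) (star T ξ)
  have hp : p ∈ C.topologicalClosure := by
    rw [← Submodule.orthogonal_orthogonal_eq_closure]
    rw [Submodule.mem_orthogonal]
    intro z hz
    have hz' : ∀ c ∈ C, ⟪c, z⟫_ℝ = 0 := (Submodule.mem_orthogonal C z).mp hz
    have step1 : ∀ b : B, Complex.re (⟪z.fst, π b ξ⟫_ℂ + ⟪ξ, π b z.snd⟫_ℂ) = 0 := by
      intro b
      have hb : ⟪f b, z⟫_ℝ = 0 := hz' (f b) ⟨b, rfl⟩
      rw [hrinner, hinner, hmk_fst, hmk_snd] at hb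
      have h1 : ⟪π b ξ, z.fst⟫_ℂ = starRingEnd ℂ ⟪z.fst, π b ξ⟫_ℂ := (inner_conj_symm _ _).symm
      have h2 : ⟪π (star b) ξ, z.snd⟫_ℂ = ⟪ξ, π b z.snd⟫_ℂ := by
        rw [map_star, ContinuousLinearMap.star_eq_adjoint,
          ContinuousLinearMap.adjoint_inner_left]
      rw [h1, h2] at hb
      rw [Complex.add_re] at hb ⊢
      rwa [Complex.conj_re] at hb
    have step2 : ∀ b : B, ⟪z.fst, π b ξ⟫_ℂ + ⟪ξ, π b z.snd⟫_ℂ = 0 := by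
      intro b
      have hre := step1 b
      have him := step1 ((Complex.I : ℂ) • b)
      rw [map_smul] at him
      have e1 : ⟪z.fst, (Complex.I • π b) ξ⟫_ℂ = Complex.I * ⟪z.fst, π b ξ⟫_ℂ := by
        rw [ContinuousLinearMap.smul_apply, inner_smul_right]
      have e2 : ⟪ξ, (Complex.I • π b) z.snd⟫_ℂ = Complex.I * ⟪ξ, π b z.snd⟫_ℂ := by
        rw [ContinuousLinearMap.smul_apply, inner_smul_right]
      rw [e1, e2, ← mul_add] at him
      rw [Complex.mul_re, Complex.I_re, Complex.I_im] at him
      simp only [zero_mul, one_mul, zero_sub, neg_eq_zero] at him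
      exact Complex.ext hre him
    have step3 : ⟪z.fst, T ξ⟫_ℂ + ⟪ξ, T z.snd⟫_ℂ = 0 :=
      aux_vn2 π T hT ξ z.snd z.fst ξ step2
    rw [hrinner, hinner, hmk_fst, hmk_snd]
    have h4 : ⟪z.snd, (star T) ξ⟫_ℂ = starRingEnd ℂ ⟪ξ, T z.snd⟫_ℂ := by
      rw [ContinuousLinearMap.star_eq_adjoint, ContinuousLinearMap.adjoint_inner_right,
        ← inner_conj_symm]
    rw [h4, Complex.add_re, Complex.conj_re, ← Complex.add_re, step3, Complex.zero_re]
  have hpc : p ∈ closure (C : Set K) := by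
    rw [← Submodule.topologicalClosure_coe]
    exact hp
  obtain ⟨c, hc, hdist⟩ := Metric.mem_closure_iff.mp hpc δ hδ
  obtain ⟨b, rfl⟩ := hc
  refine ⟨b, ?_, ?_⟩
  · have hfst : (p - f b).fst = T ξ - π b ξ := rfl
    have hn : ‖(p - f b).fst‖ ≤ ‖p - f b‖ := by
      have hsq := WithLp.prod_norm_sq_eq_of_L2 (p - f b)
      have h5 : ‖(p - f b).fst‖ ^ 2 ≤ ‖p - f b‖ ^ 2 := by
        rw [hsq]
        have := sq_nonneg ‖(p - f b).snd‖
        linarith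
      calc ‖(p - f b).fst‖ = Real.sqrt (‖(p - f b).fst‖ ^ 2) := (Real.sqrt_sq (norm_nonneg _)).symm
      _ ≤ Real.sqrt (‖p - f b‖ ^ 2) := Real.sqrt_le_sqrt h5
      _ = ‖p - f b‖ := Real.sqrt_sq (norm_nonneg _)
    rw [norm_sub_rev, ← hfst]
    calc ‖(p - f b).fst‖ ≤ ‖p - f b‖ := hn
    _ = dist p (f b) := (dist_eq_norm _ _).symm
    _ < δ := hdist
  · have hsnd : (p - f b).snd = (star T) ξ - π (star b) ξ := rfl
    have hn : ‖(p - f b).snd‖ ≤ ‖p - f b‖ := by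
      have hsq := WithLp.prod_norm_sq_eq_of_L2 (p - f b)
      have h5 : ‖(p - f b).snd‖ ^ 2 ≤ ‖p - f b‖ ^ 2 := by
        rw [hsq]
        have := sq_nonneg ‖(p - f b).fst‖
        linarith
      calc ‖(p - f b).snd‖ = Real.sqrt (‖(p - f b).snd‖ ^ 2) := (Real.sqrt_sq (norm_nonneg _)).symm
      _ ≤ Real.sqrt (‖p - f b‖ ^ 2) := Real.sqrt_le_sqrt h5
      _ = ‖p - f b‖ := Real.sqrt_sq (norm_nonneg _)
    rw [norm_sub_rev, ← hsnd]
    calc ‖(p - f b).snd‖ ≤ ‖p - f b‖ := hn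
    _ = dist p (f b) := (dist_eq_norm _ _).symm
    _ < δ := hdist


/-- Let `φ` be a state on a unital C*-algebra `B` realized as the vector state of a
unital star-representation `π` on `H` with cyclic unit vector `ξ`, and let `M` be the
double commutant of `π(B)` in `B(H)`. Suppose there is a unitary `u ∈ M` with
`⟨u^k ξ, ξ⟩ = 0` for all integers `k ≠ 0` (equivalently `⟨u^k ξ, ξ⟩ = ⟨(u*)^k ξ, ξ⟩ = 0`
for all natural numbers `k ≠ 0`) and `⟨u* T u ξ, ξ⟩ = ⟨T ξ, ξ⟩` for all `T ∈ M`. Then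
for every finite `F ⊆ B` and `ε > 0` there is `b ∈ B` with `|φ(b b*) - 1| < ε`,
`|φ(x b)| < ε` and `|φ(b* x b) - φ(x)| < ε` for all `x ∈ F`. -/
theorem haar_unitary_approximation {B : Type} [NormedRing B] [StarRing B] [CStarRing B]
    [NormedAlgebra ℂ B] [CompleteSpace B] [StarModule ℂ B]
    (φ : B →ₗ[ℂ] ℂ)
    {H : Type} [NormedAddCommGroup H] [InnerProductSpace ℂ H] [CompleteSpace H]
    (π : B →⋆ₐ[ℂ] (H →L[ℂ] H))
    (ξ : H) (hξ : ‖ξ‖ = 1) (hcyclic : DenseRange fun b : B => π b ξ)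
    (hφ : ∀ x : B, φ x = ⟪ξ, π x ξ⟫_ℂ)
    (M : Set (H →L[ℂ] H))
    (hM : M = Set.centralizer (Set.centralizer (Set.range fun b : B => π b)))
    (u : H →L[ℂ] H) (hu_mem : u ∈ M)
    (hu_unitary : u * star u = 1 ∧ star u * u = 1)
    (hu_haar : ∀ k : ℕ, k ≠ 0 → ⟪ξ, (u ^ k) ξ⟫_ℂ = 0 ∧ ⟪ξ, ((star u) ^ k) ξ⟫_ℂ = 0)
    (hu_fix : ∀ T ∈ M, ⟪ξ, (star u * T * u) ξ⟫_ℂ = ⟪ξ, T ξ⟫_ℂ)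
    (F : Finset B) (ε : ℝ) (hε : 0 < ε) :
    ∃ b : B, ‖φ (b * star b) - 1‖ < ε ∧
      ∀ x ∈ F, ‖φ (x * b)‖ < ε ∧ ‖φ (star b * x * b) - φ x‖ < ε := by
  classical
  -- moving adjoints across the inner product
  have hmove : ∀ (A : H →L[ℂ] H) (x y : H), ⟪(star A) x, y⟫_ℂ = ⟪x, A y⟫_ℂ := by
    intro A x y
    rw [ContinuousLinearMap.star_eq_adjoint, ContinuousLinearMap.adjoint_inner_left]
  -- powers of u are unitaries
  have upow : ∀ n : ℕ, star (u ^ n) * u ^ n = 1 ∧ (u ^ n) * star (u ^ n) = 1 := by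
    intro n
    induction n with
    | zero => simp
    | succ n ih =>
      constructor
      · rw [pow_succ, star_mul]
        calc star u * star (u ^ n) * (u ^ n * u)
            = star u * (star (u ^ n) * u ^ n) * u := by
              simp only [mul_assoc]
        _ = star u * u := by rw [ih.1, mul_one]
        _ = 1 := hu_unitary.2
      · rw [pow_succ, star_mul]
        calc u ^ n * u * (star u * star (u ^ n))
            = u ^ n * (u * star u) * star (u ^ n) := by
              simp only [mul_assoc]
        _ = u ^ n * star (u ^ n) := by rw [hu_unitary.1, mul_one]
        _ = 1 := ih.2
  -- isometry of unitaries
  have hiso : ∀ (A : H →L[ℂ] H), star A * A = 1 → ∀ x : H, ‖A x‖ = ‖x‖ := by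
    intro A hA x
    have h1 : ⟪A x, A x⟫_ℂ = ⟪x, x⟫_ℂ := by
      calc ⟪A x, A x⟫_ℂ = ⟪(star A) (A x), x⟫_ℂ := by rw [hmove]
      _ = ⟪(star A * A) x, x⟫_ℂ := rfl
      _ = ⟪x, x⟫_ℂ := by rw [hA, ContinuousLinearMap.one_apply]
    rw [norm_eq_sqrt_re_inner (𝕜 := ℂ), h1, ← norm_eq_sqrt_re_inner (𝕜 := ℂ)]
  have hun : ∀ n : ℕ, ‖(u ^ n) ξ‖ = 1 := by
    intro n; rw [hiso _ (upow n).1, hξ]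
  have hun' : ∀ n : ℕ, ‖(star (u ^ n)) ξ‖ = 1 := by
    intro n
    rw [hiso (star (u ^ n)) (by rw [star_star]; exact (upow n).2), hξ]
  -- orthonormality of the orbit
  have honb : Orthonormal ℂ (fun n : ℕ => (u ^ n) ξ) := by
    rw [orthonormal_iff_ite]
    intro m n
    have hsw : ∀ y : H, ⟪(u ^ m) ξ, y⟫_ℂ = ⟪ξ, (star (u ^ m)) y⟫_ℂ := by
      intro y; rw [← hmove (star (u ^ m)) ξ y, star_star]
    rw [hsw]
    by_cases hmn : m = n
    · subst hmn
      simp only [if_pos rfl]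
      have : (star (u ^ m)) ((u ^ m) ξ) = ξ := by
        calc (star (u ^ m)) ((u ^ m) ξ) = (star (u ^ m) * u ^ m) ξ := rfl
        _ = ξ := by rw [(upow m).1, ContinuousLinearMap.one_apply]
      rw [this, @inner_self_eq_norm_sq_to_K ℂ, hξ]
      norm_num
    · simp only [if_neg hmn]
      rcases lt_or_gt_of_ne hmn with hlt | hgt
      · -- m < n
        obtain ⟨c, hc0, rfl⟩ : ∃ c, c ≠ 0 ∧ n = m + c := ⟨n - m, by omega, by omega⟩
        have hcan : star (u ^ m) * u ^ (m + c) = u ^ c := by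
          rw [pow_add, ← mul_assoc, (upow m).1, one_mul]
        calc ⟪ξ, (star (u ^ m)) ((u ^ (m + c)) ξ)⟫_ℂ
            = ⟪ξ, (star (u ^ m) * u ^ (m + c)) ξ⟫_ℂ := rfl
        _ = ⟪ξ, (u ^ c) ξ⟫_ℂ := by rw [hcan]
        _ = 0 := (hu_haar _ hc0).1
      · -- m > n
        obtain ⟨c, hc0, rfl⟩ : ∃ c, c ≠ 0 ∧ m = n + c := ⟨m - n, by omega, by omega⟩
        have hcan : star (u ^ (n + c)) * u ^ n = star (u ^ c) := by
          rw [pow_add, star_mul, mul_assoc, (upow n).1, mul_one]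
        calc ⟪ξ, (star (u ^ (n + c))) ((u ^ n) ξ)⟫_ℂ
            = ⟪ξ, (star (u ^ (n + c)) * u ^ n) ξ⟫_ℂ := rfl
        _ = ⟪ξ, (star (u ^ c)) ξ⟫_ℂ := by rw [hcan]
        _ = 0 := by rw [star_pow]; exact (hu_haar _ hc0).2
  -- Bessel: matrix coefficients tend to zero
  have hten : ∀ η : H, Filter.Tendsto (fun n : ℕ => ‖⟪η, (u ^ n) ξ⟫_ℂ‖)
      Filter.atTop (nhds 0) := by
    intro η
    have hsum := honb.inner_products_summable (x := η)
    have h2 := hsum.tendsto_atTop_zero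
    have h3 : Filter.Tendsto (fun n : ℕ => Real.sqrt (‖⟪(u ^ n) ξ, η⟫_ℂ‖ ^ 2))
        Filter.atTop (nhds (Real.sqrt 0)) := h2.sqrt
    rw [Real.sqrt_zero] at h3
    have h4 : (fun n : ℕ => Real.sqrt (‖⟪(u ^ n) ξ, η⟫_ℂ‖ ^ 2))
        = fun n : ℕ => ‖⟪η, (u ^ n) ξ⟫_ℂ‖ := by
      funext n
      rw [Real.sqrt_sq (norm_nonneg _), ← norm_inner_symm]
    rwa [h4] at h3
  -- M facts
  subst hM
  set S : Set (H →L[ℂ] H) := Set.range fun b : B => π b with hS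
  have hSstar : ∀ s : H →L[ℂ] H, s ∈ S → star s ∈ S := by
    rintro s ⟨b, rfl⟩
    exact ⟨star b, map_star π b⟩
  have hS1star : ∀ s : H →L[ℂ] H, s ∈ S.centralizer → star s ∈ S.centralizer :=
    fun s hs => Set.star_mem_centralizer' hSstar hs
  have hMstar : ∀ T ∈ S.centralizer.centralizer, star T ∈ S.centralizer.centralizer :=
    fun T hT => Set.star_mem_centralizer' hS1star hT
  have hMmul : ∀ T T' : H →L[ℂ] H, T ∈ S.centralizer.centralizer →
      T' ∈ S.centralizer.centralizer → T * T' ∈ S.centralizer.centralizer :=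
    fun T T' h h' => Set.mul_mem_centralizer h h'
  have hMpow : ∀ n : ℕ, u ^ n ∈ S.centralizer.centralizer := by
    intro n
    induction n with
    | zero => rw [pow_zero]; exact Set.one_mem_centralizer
    | succ n ih => rw [pow_succ]; exact hMmul _ _ ih hu_mem
  have hπM : ∀ b : B, π b ∈ S.centralizer.centralizer :=
    fun b => Set.subset_centralizer_centralizer ⟨b, rfl⟩
  -- iterated invariance of the vector state
  have hinv : ∀ n : ℕ, ∀ T ∈ S.centralizer.centralizer,
      ⟪ξ, (((star u) ^ n) * T * (u ^ n)) ξ⟫_ℂ = ⟪ξ, T ξ⟫_ℂ := by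
    intro n
    induction n with
    | zero => intro T _; simp
    | succ n ih =>
      intro T hT
      have hT' : star u * T * u ∈ S.centralizer.centralizer :=
        hMmul _ _ (hMmul _ _ (hMstar u hu_mem) hT) hu_mem
      have hre : (star u) ^ (n + 1) * T * u ^ (n + 1)
          = (star u) ^ n * (star u * T * u) * u ^ n := by
        rw [pow_succ, pow_succ' u]
        simp only [mul_assoc]
      rw [hre, ih _ hT', hu_fix T hT]
  -- choose n from Bessel
  have hsum_t : Filter.Tendsto
      (fun n : ℕ => ∑ x ∈ F, ‖⟪π (star x) ξ, (u ^ n) ξ⟫_ℂ‖) Filter.atTop (nhds 0) := by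
    have h0 : (0 : ℝ) = ∑ _x ∈ F, (0 : ℝ) := by simp
    rw [h0]
    exact tendsto_finset_sum F (fun x _ => hten (π (star x) ξ))
  obtain ⟨n, hn⟩ := (hsum_t.eventually (gt_mem_nhds (by positivity : (0:ℝ) < ε / 2))).exists
  -- constants
  set C₀ : ℝ := 1 + ∑ x ∈ F, (‖π x‖ + ‖π (star x) ξ‖) with hC₀
  have hC₀1 : 1 ≤ C₀ := by
    have : (0:ℝ) ≤ ∑ x ∈ F, (‖π x‖ + ‖π (star x) ξ‖) :=
      Finset.sum_nonneg (fun x _ => by positivity)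
    linarith
  have hC₀pos : 0 < C₀ := by linarith
  have hbound : ∀ x ∈ F, ‖π x‖ ≤ C₀ ∧ ‖π (star x) ξ‖ ≤ C₀ := by
    intro x hx
    have h1 : ‖π x‖ + ‖π (star x) ξ‖ ≤ ∑ y ∈ F, (‖π y‖ + ‖π (star y) ξ‖) :=
      Finset.single_le_sum (f := fun y => ‖π y‖ + ‖π (star y) ξ‖)
        (fun y _ => by positivity) hx
    constructor
    · have : (0:ℝ) ≤ ‖π (star x) ξ‖ := norm_nonneg _
      linarith
    · have : (0:ℝ) ≤ ‖π x‖ := norm_nonneg _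
      linarith
  set δ : ℝ := min 1 (ε / (8 * C₀)) with hδdef
  have hδpos : 0 < δ := lt_min one_pos (by positivity)
  have hδ1 : δ ≤ 1 := min_le_left _ _
  have hδ2 : δ ≤ ε / (8 * C₀) := min_le_right _ _
  have hδε : C₀ * δ ≤ ε / 8 := by
    calc C₀ * δ ≤ C₀ * (ε / (8 * C₀)) := by
          exact mul_le_mul_of_nonneg_left hδ2 (le_of_lt hC₀pos)
    _ = ε / 8 := by field_simp
  have hδε' : δ ≤ ε / 8 := by
    calc δ = 1 * δ := (one_mul δ).symm
    _ ≤ C₀ * δ := mul_le_mul_of_nonneg_right hC₀1 (le_of_lt hδpos)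
    _ ≤ ε / 8 := hδε
  -- strong* approximation of u^n
  obtain ⟨b, hb1, hb2⟩ := aux_sstar π ξ (u ^ n) (hMpow n) δ hδpos
  refine ⟨b, ?_, ?_⟩
  · -- ‖φ (b * star b) - 1‖ < ε
    have hval : φ (b * star b) = ⟪π (star b) ξ, π (star b) ξ⟫_ℂ := by
      rw [hφ, map_mul]
      calc ⟪ξ, (π b * π (star b)) ξ⟫_ℂ = ⟪ξ, (π b) ((π (star b)) ξ)⟫_ℂ := rfl
      _ = ⟪(star (π b)) ξ, (π (star b)) ξ⟫_ℂ := (hmove (π b) ξ _).symm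
      _ = ⟪π (star b) ξ, π (star b) ξ⟫_ℂ := by rw [← map_star]
    have hvv : ⟪π (star b) ξ, π (star b) ξ⟫_ℂ = ((‖π (star b) ξ‖ ^ 2 : ℝ) : ℂ) := by
      rw [@inner_self_eq_norm_sq_to_K ℂ]
      norm_cast
    rw [hval, hvv]
    have hcast : ((‖π (star b) ξ‖ ^ 2 : ℝ) : ℂ) - 1 = ((‖π (star b) ξ‖ ^ 2 - 1 : ℝ) : ℂ) := by
      push_cast; ring
    rw [hcast, Complex.norm_real, Real.norm_eq_abs]
    -- numeric estimate
    have hna : ‖(star (u ^ n)) ξ‖ = 1 := hun' n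
    have h1 : |‖π (star b) ξ‖ - 1| ≤ ‖π (star b) ξ - (star (u ^ n)) ξ‖ := by
      rw [← hna]
      exact abs_norm_sub_norm_le _ _
    have h2 : ‖π (star b) ξ‖ ≤ 1 + δ := by
      have := norm_sub_norm_le (π (star b) ξ) ((star (u ^ n)) ξ)
      rw [hna] at this
      linarith [le_of_lt hb2]
    have h3 : |‖π (star b) ξ‖ - 1| < δ := lt_of_le_of_lt h1 hb2
    have habs : |‖π (star b) ξ‖ ^ 2 - 1| = |‖π (star b) ξ‖ - 1| * |‖π (star b) ξ‖ + 1| := by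
      rw [← abs_mul]; ring_nf
    have h4 : |‖π (star b) ξ‖ + 1| ≤ 2 + δ := by
      rw [abs_of_nonneg (by positivity)]
      linarith
    have h5 : |‖π (star b) ξ‖ ^ 2 - 1| ≤ δ * (2 + δ) := by
      rw [habs]
      exact mul_le_mul (le_of_lt h3) h4 (abs_nonneg _) (le_of_lt hδpos)
    nlinarith
  · -- the two conditions for x ∈ F
    intro x hx
    have hnx : ‖π x‖ ≤ C₀ := (hbound x hx).1
    have hnxs : ‖π (star x) ξ‖ ≤ C₀ := (hbound x hx).2
    constructor
    · -- ‖φ (x * b)‖ < ε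
      have hval : φ (x * b) = ⟪π (star x) ξ, π b ξ⟫_ℂ := by
        rw [hφ, map_mul]
        calc ⟪ξ, (π x * π b) ξ⟫_ℂ = ⟪ξ, (π x) ((π b) ξ)⟫_ℂ := rfl
        _ = ⟪(star (π x)) ξ, (π b) ξ⟫_ℂ := (hmove (π x) ξ _).symm
        _ = ⟪π (star x) ξ, π b ξ⟫_ℂ := by rw [← map_star]
      rw [hval]
      have hdec : ⟪π (star x) ξ, π b ξ⟫_ℂ = ⟪π (star x) ξ, (u ^ n) ξ⟫_ℂ
          + ⟪π (star x) ξ, π b ξ - (u ^ n) ξ⟫_ℂ := by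
        rw [inner_sub_right]; ring
      rw [hdec]
      have ht1 : ‖⟪π (star x) ξ, (u ^ n) ξ⟫_ℂ‖ < ε / 2 := by
        have hle : ‖⟪π (star x) ξ, (u ^ n) ξ⟫_ℂ‖
            ≤ ∑ y ∈ F, ‖⟪π (star y) ξ, (u ^ n) ξ⟫_ℂ‖ :=
          Finset.single_le_sum (f := fun y => ‖⟪π (star y) ξ, (u ^ n) ξ⟫_ℂ‖)
            (fun y _ => norm_nonneg _) hx
        exact lt_of_le_of_lt hle hn
      have ht2 : ‖⟪π (star x) ξ, π b ξ - (u ^ n) ξ⟫_ℂ‖ ≤ C₀ * δ := by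
        calc ‖⟪π (star x) ξ, π b ξ - (u ^ n) ξ⟫_ℂ‖
            ≤ ‖π (star x) ξ‖ * ‖π b ξ - (u ^ n) ξ‖ := norm_inner_le_norm _ _
        _ ≤ C₀ * δ := mul_le_mul hnxs (le_of_lt hb1) (norm_nonneg _) (le_of_lt hC₀pos)
      calc ‖⟪π (star x) ξ, (u ^ n) ξ⟫_ℂ + ⟪π (star x) ξ, π b ξ - (u ^ n) ξ⟫_ℂ‖
          ≤ ‖⟪π (star x) ξ, (u ^ n) ξ⟫_ℂ‖ + ‖⟪π (star x) ξ, π b ξ - (u ^ n) ξ⟫_ℂ‖ :=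
            norm_add_le _ _
      _ < ε := by nlinarith [ht1, ht2, hδε]
    · -- ‖φ (star b * x * b) - φ x‖ < ε
      have hval : φ (star b * x * b) = ⟪π b ξ, (π x) ((π b) ξ)⟫_ℂ := by
        rw [hφ, map_mul, map_mul]
        calc ⟪ξ, (π (star b) * π x * π b) ξ⟫_ℂ
            = ⟪ξ, (π (star b)) ((π x) ((π b) ξ))⟫_ℂ := rfl
        _ = ⟪ξ, (star (π b)) ((π x) ((π b) ξ))⟫_ℂ := by rw [← map_star]
        _ = ⟪π b ξ, (π x) ((π b) ξ)⟫_ℂ := by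
              rw [← hmove (star (π b)) ξ _, star_star]
      have hfix : φ x = ⟪(u ^ n) ξ, (π x) ((u ^ n) ξ)⟫_ℂ := by
        rw [hφ]
        have h1 : ⟪(u ^ n) ξ, (π x) ((u ^ n) ξ)⟫_ℂ
            = ⟪ξ, (star (u ^ n)) ((π x) ((u ^ n) ξ))⟫_ℂ := by
          rw [← hmove (star (u ^ n)) ξ _, star_star]
        have h2 : (star (u ^ n)) ((π x) ((u ^ n) ξ))
            = (((star u) ^ n) * π x * (u ^ n)) ξ := by
          rw [star_pow]; rfl
        rw [h1, h2, hinv n (π x) (hπM x)]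
      rw [hval, hfix]
      -- numeric estimate
      set v₀ : H := π b ξ
      set a₀ : H := (u ^ n) ξ
      have hna : ‖a₀‖ = 1 := hun n
      have hv₀ : ‖v₀ - a₀‖ < δ := hb1
      have hv₀n : ‖v₀‖ ≤ 1 + δ := by
        have := norm_sub_norm_le v₀ a₀
        rw [hna] at this
        linarith [le_of_lt hv₀]
      have hdec : ⟪v₀, (π x) v₀⟫_ℂ - ⟪a₀, (π x) a₀⟫_ℂ
          = ⟪v₀ - a₀, (π x) v₀⟫_ℂ + ⟪a₀, (π x) (v₀ - a₀)⟫_ℂ := by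
        rw [inner_sub_left, map_sub, inner_sub_right]
        ring
      rw [hdec]
      have ht1 : ‖⟪v₀ - a₀, (π x) v₀⟫_ℂ‖ ≤ δ * (C₀ * (1 + δ)) := by
        calc ‖⟪v₀ - a₀, (π x) v₀⟫_ℂ‖ ≤ ‖v₀ - a₀‖ * ‖(π x) v₀‖ := norm_inner_le_norm _ _
        _ ≤ δ * (C₀ * (1 + δ)) := by
            apply mul_le_mul (le_of_lt hv₀) _ (norm_nonneg _) (le_of_lt hδpos)
            calc ‖(π x) v₀‖ ≤ ‖π x‖ * ‖v₀‖ := (π x).le_opNorm v₀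
            _ ≤ C₀ * (1 + δ) := mul_le_mul hnx hv₀n (norm_nonneg _) (le_of_lt hC₀pos)
      have ht2 : ‖⟪a₀, (π x) (v₀ - a₀)⟫_ℂ‖ ≤ C₀ * δ := by
        calc ‖⟪a₀, (π x) (v₀ - a₀)⟫_ℂ‖ ≤ ‖a₀‖ * ‖(π x) (v₀ - a₀)‖ := norm_inner_le_norm _ _
        _ = ‖(π x) (v₀ - a₀)‖ := by rw [hna, one_mul]
        _ ≤ ‖π x‖ * ‖v₀ - a₀‖ := (π x).le_opNorm _
        _ ≤ C₀ * δ := mul_le_mul hnx (le_of_lt hv₀) (norm_nonneg _) (le_of_lt hC₀pos)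
      calc ‖⟪v₀ - a₀, (π x) v₀⟫_ℂ + ⟪a₀, (π x) (v₀ - a₀)⟫_ℂ‖
          ≤ ‖⟪v₀ - a₀, (π x) v₀⟫_ℂ‖ + ‖⟪a₀, (π x) (v₀ - a₀)⟫_ℂ‖ := norm_add_le _ _
      _ ≤ δ * (C₀ * (1 + δ)) + C₀ * δ := by linarith
      _ = (C₀ * δ) * (1 + δ) + C₀ * δ := by ring
      _ ≤ (ε / 8) * 2 + ε / 8 := by
          have h9 : (0:ℝ) ≤ C₀ * δ := by positivity
          have h10 : 1 + δ ≤ 2 := by linarith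
          have h11 : (C₀ * δ) * (1 + δ) ≤ (ε / 8) * 2 :=
            mul_le_mul hδε h10 (by linarith) (by linarith)
          linarith
      _ < ε := by linarith
end
end
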